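/- arXiv:1811.06188 — 5 statements merged into one kernel-verified Lean document; each statement's English description precedes it below -/
import Mathlib

section
/- Assume φ : F → F' is an isomorphism. Let Y be the cochain complex which agrees with X outside the four indicated degrees and in those degrees is A → B → C → D with differentials a, c − e∘φ^{−1}∘d, and f. Then Y is a cochain complex, and X and Y are homotopy equivalent. Explicitly, the degreewise maps α : X → Y (identity outside the indicated degrees, (id_B, 0) : B⊕F → B, and (id_C, −e∘φ^{−1}) : C⊕F' → C) and β : Y → X (identity outside, (id_B, −φ^{−1}∘d)ᵗ : B → B⊕F, and (id_C, 0)ᵗ : C → C⊕F') are chain maps satisfying α∘β = id_Y and id_X − β∘α = d_X∘q + q∘d_X, where q : X → X of homological degree −1 is φ^{−1} : F' → F on the indicated summands and zero otherwise. -/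
/-!
STATEMENT 11 (Gaussian elimination in an additive category).
A cochain complex `X` in an additive category `𝒜` which, in the four consecutive
degrees `0, 1, 2, 3`, has the form `A ⟶ B ⊞ F ⟶ C ⊞ F' ⟶ D` (with `A = V 0`,
`D = V 3`, and with arbitrary objects `V i` and differentials `dV i` elsewhere),
with differential components `a : A ⟶ B`, `b : A ⟶ F`, `c : B ⟶ C`, `dm : B ⟶ F'`,
`e : F ⟶ C`, `φ : F ⟶ F'`, `f : C ⟶ D`, `g : F' ⟶ D`, where `φ` is an isomorphism.
-/

open CategoryTheory CategoryTheory.Limits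

universe v u

variable {𝒜 : Type u} [Category.{v} 𝒜] [Preadditive 𝒜] [HasBinaryBiproducts 𝒜]

/-- A ℤ-indexed family of objects with degree-one maps (a complex without the
condition `d² = 0`). -/
structure PreCx (𝒜 : Type u) [Category.{v} 𝒜] [Preadditive 𝒜] : Type (max u v) where
  obj : ℤ → 𝒜
  d : ∀ i : ℤ, obj i ⟶ obj (i + 1)

/-- `X` is a cochain complex: `d² = 0`. -/
def PreCx.IsComplex (X : PreCx 𝒜) : Prop := ∀ i, X.d i ≫ X.d (i + 1) = 0

/-- `α` is a chain map from `X` to `Y`. -/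
def PreCx.IsChainMap (X Y : PreCx 𝒜) (α : ∀ i, X.obj i ⟶ Y.obj i) : Prop :=
  ∀ i, X.d i ≫ α (i + 1) = α i ≫ Y.d i

/-- The objects of the complex `X`: `B ⊞ F` in degree 1, `C ⊞ F'` in degree 2,
arbitrary objects (`V i`, with `A = V 0` and `D = V 3`) elsewhere. -/
noncomputable def wObjX (V : ℤ → 𝒜) (B F C F' : 𝒜) (i : ℤ) : 𝒜 :=
  if i = 1 then B ⊞ F else if i = 2 then C ⊞ F' else V i

/-- The differential of `X`: `(a, b)ᵗ` in degree 0; the matrix `(c, dm; e, φ)`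
in degree 1; `(f, g)` in degree 2; arbitrary (`dV`) elsewhere. -/
noncomputable def wdX (V : ℤ → 𝒜) (dV : ∀ i, V i ⟶ V (i + 1)) (B F C F' : 𝒜)
    (a : V 0 ⟶ B) (b : V 0 ⟶ F) (c : B ⟶ C) (dm : B ⟶ F') (e : F ⟶ C)
    (φ : F ⟶ F') (f : C ⟶ V 3) (g : F' ⟶ V 3) (i : ℤ) :
    wObjX V B F C F' i ⟶ wObjX V B F C F' (i + 1) :=
  if h0 : i = 0 then
    eqToHom (by subst h0; rfl) ≫ biprod.lift a b ≫ eqToHom (by subst h0; rfl)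
  else if h1 : i = 1 then
    eqToHom (by subst h1; rfl) ≫
      biprod.lift (biprod.desc c e) (biprod.desc dm φ) ≫ eqToHom (by subst h1; rfl)
  else if h2 : i = 2 then
    eqToHom (by subst h2; rfl) ≫ biprod.desc f g ≫ eqToHom (by subst h2; rfl)
  else
    eqToHom (by unfold wObjX; rw [if_neg h1, if_neg h2]) ≫ dV i ≫
      eqToHom (by unfold wObjX; rw [if_neg (by omega : ¬(i + 1 = 1)), if_neg (by omega : ¬(i + 1 = 2))])

/-- The complex `X`. -/
noncomputable def Xcx (V : ℤ → 𝒜) (dV : ∀ i, V i ⟶ V (i + 1)) (B F C F' : 𝒜)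
    (a : V 0 ⟶ B) (b : V 0 ⟶ F) (c : B ⟶ C) (dm : B ⟶ F') (e : F ⟶ C)
    (φ : F ⟶ F') (f : C ⟶ V 3) (g : F' ⟶ V 3) : PreCx 𝒜 :=
  ⟨wObjX V B F C F', wdX V dV B F C F' a b c dm e φ f g⟩

/-- The objects of the reduced complex `Y`: `B` in degree 1, `C` in degree 2,
agreeing with `X` elsewhere. -/
noncomputable def wObjY (V : ℤ → 𝒜) (B C : 𝒜) (i : ℤ) : 𝒜 :=
  if i = 1 then B else if i = 2 then C else V i

/-- The differential of `Y`: `a` in degree 0, `c − e ∘ φ⁻¹ ∘ dm` in degree 1,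
`f` in degree 2, agreeing with `X` elsewhere. -/
noncomputable def wdY (V : ℤ → 𝒜) (dV : ∀ i, V i ⟶ V (i + 1)) (B F C F' : 𝒜)
    (a : V 0 ⟶ B) (c : B ⟶ C) (dm : B ⟶ F') (e : F ⟶ C)
    (φ : F ⟶ F') [IsIso φ] (f : C ⟶ V 3) (i : ℤ) :
    wObjY V B C i ⟶ wObjY V B C (i + 1) :=
  if h0 : i = 0 then
    eqToHom (by subst h0; rfl) ≫ a ≫ eqToHom (by subst h0; rfl)
  else if h1 : i = 1 then
    eqToHom (by subst h1; rfl) ≫ (c - dm ≫ inv φ ≫ e) ≫ eqToHom (by subst h1; rfl)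
  else if h2 : i = 2 then
    eqToHom (by subst h2; rfl) ≫ f ≫ eqToHom (by subst h2; rfl)
  else
    eqToHom (by unfold wObjY; rw [if_neg h1, if_neg h2]) ≫ dV i ≫
      eqToHom (by unfold wObjY; rw [if_neg (by omega : ¬(i + 1 = 1)), if_neg (by omega : ¬(i + 1 = 2))])

/-- The complex `Y`. -/
noncomputable def Ycx (V : ℤ → 𝒜) (dV : ∀ i, V i ⟶ V (i + 1)) (B F C F' : 𝒜)
    (a : V 0 ⟶ B) (c : B ⟶ C) (dm : B ⟶ F') (e : F ⟶ C)
    (φ : F ⟶ F') [IsIso φ] (f : C ⟶ V 3) : PreCx 𝒜 :=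
  ⟨wObjY V B C, wdY V dV B F C F' a c dm e φ f⟩

/-- The chain map `α : X ⟶ Y`: the identity outside the indicated degrees,
`(id_B, 0)` in degree 1, and `(id_C, −e ∘ φ⁻¹)` in degree 2. -/
noncomputable def αmap (V : ℤ → 𝒜) (B F C F' : 𝒜) (e : F ⟶ C) (φ : F ⟶ F') [IsIso φ]
    (i : ℤ) : wObjX V B F C F' i ⟶ wObjY V B C i :=
  if h1 : i = 1 then
    eqToHom (by subst h1; rfl) ≫ biprod.fst ≫ eqToHom (by subst h1; rfl)
  else if h2 : i = 2 then
    eqToHom (by subst h2; rfl) ≫ biprod.desc (𝟙 C) (-(inv φ ≫ e)) ≫ eqToHom (by subst h2; rfl)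
  else
    eqToHom (by unfold wObjX wObjY; simp only [if_neg h1, if_neg h2])

/-- The chain map `β : Y ⟶ X`: the identity outside the indicated degrees,
`(id_B, −φ⁻¹ ∘ dm)ᵗ` in degree 1, and `(id_C, 0)ᵗ` in degree 2. -/
noncomputable def βmap (V : ℤ → 𝒜) (B F C F' : 𝒜) (dm : B ⟶ F') (φ : F ⟶ F') [IsIso φ]
    (i : ℤ) : wObjY V B C i ⟶ wObjX V B F C F' i :=
  if h1 : i = 1 then
    eqToHom (by subst h1; rfl) ≫ biprod.lift (𝟙 B) (-(dm ≫ inv φ)) ≫ eqToHom (by subst h1; rfl)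
  else if h2 : i = 2 then
    eqToHom (by subst h2; rfl) ≫ biprod.lift (𝟙 C) 0 ≫ eqToHom (by subst h2; rfl)
  else
    eqToHom (by unfold wObjX wObjY; simp only [if_neg h1, if_neg h2])

/-- The homotopy `q` (of homological degree `−1`): `φ⁻¹ : F' ⟶ F` on the indicated
summands (from degree 2 to degree 1) and zero otherwise. -/
noncomputable def qmap (V : ℤ → 𝒜) (B F C F' : 𝒜) (φ : F ⟶ F') [IsIso φ] (i : ℤ) :
    wObjX V B F C F' (i + 1) ⟶ wObjX V B F C F' i :=
  if h1 : i = 1 then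
    eqToHom (by subst h1; rfl) ≫
      biprod.lift (0 : C ⊞ F' ⟶ B) (biprod.desc (0 : C ⟶ F) (inv φ)) ≫
      eqToHom (by subst h1; rfl)
  else 0


lemma wObjX_eq (V : ℤ → 𝒜) (B F C F' : 𝒜) {i : ℤ} (h1 : i ≠ 1) (h2 : i ≠ 2) :
    wObjX V B F C F' i = V i := by
  unfold wObjX; rw [if_neg h1, if_neg h2]

lemma wObjY_eq (V : ℤ → 𝒜) (B C : 𝒜) {i : ℤ} (h1 : i ≠ 1) (h2 : i ≠ 2) :
    wObjY V B C i = V i := by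
  unfold wObjY; rw [if_neg h1, if_neg h2]

lemma wdX_gen (V : ℤ → 𝒜) (dV : ∀ i, V i ⟶ V (i + 1)) (B F C F' : 𝒜)
    (a : V 0 ⟶ B) (b : V 0 ⟶ F) (c : B ⟶ C) (dm : B ⟶ F') (e : F ⟶ C)
    (φ : F ⟶ F') (f : C ⟶ V 3) (g : F' ⟶ V 3) {i : ℤ}
    (h0 : i ≠ 0) (h1 : i ≠ 1) (h2 : i ≠ 2) :
    wdX V dV B F C F' a b c dm e φ f g i =
      eqToHom (wObjX_eq V B F C F' h1 h2) ≫ dV i ≫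
        eqToHom (wObjX_eq V B F C F' (by omega) (by omega)).symm := by
  unfold wdX; rw [dif_neg h0, dif_neg h1, dif_neg h2]

lemma wdY_gen (V : ℤ → 𝒜) (dV : ∀ i, V i ⟶ V (i + 1)) (B F C F' : 𝒜)
    (a : V 0 ⟶ B) (c : B ⟶ C) (dm : B ⟶ F') (e : F ⟶ C)
    (φ : F ⟶ F') [IsIso φ] (f : C ⟶ V 3) {i : ℤ}
    (h0 : i ≠ 0) (h1 : i ≠ 1) (h2 : i ≠ 2) :
    wdY V dV B F C F' a c dm e φ f i =
      eqToHom (wObjY_eq V B C h1 h2) ≫ dV i ≫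
        eqToHom (wObjY_eq V B C (by omega) (by omega)).symm := by
  unfold wdY; rw [dif_neg h0, dif_neg h1, dif_neg h2]

lemma αmap_gen (V : ℤ → 𝒜) (B F C F' : 𝒜) (e : F ⟶ C) (φ : F ⟶ F') [IsIso φ]
    {i : ℤ} (h1 : i ≠ 1) (h2 : i ≠ 2) :
    αmap V B F C F' e φ i =
      eqToHom ((wObjX_eq V B F C F' h1 h2).trans (wObjY_eq V B C h1 h2).symm) := by
  unfold αmap; rw [dif_neg h1, dif_neg h2]

lemma βmap_gen (V : ℤ → 𝒜) (B F C F' : 𝒜) (dm : B ⟶ F') (φ : F ⟶ F') [IsIso φ]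
    {i : ℤ} (h1 : i ≠ 1) (h2 : i ≠ 2) :
    βmap V B F C F' dm φ i =
      eqToHom ((wObjY_eq V B C h1 h2).trans (wObjX_eq V B F C F' h1 h2).symm) := by
  unfold βmap; rw [dif_neg h1, dif_neg h2]

lemma qmap_gen (V : ℤ → 𝒜) (B F C F' : 𝒜) (φ : F ⟶ F') [IsIso φ]
    {i : ℤ} (h1 : i ≠ 1) : qmap V B F C F' φ i = 0 := by
  unfold qmap; rw [dif_neg h1]

@[simp] lemma wObjX_m1 (V : ℤ → 𝒜) (B F C F' : 𝒜) : wObjX V B F C F' (-1) = V (-1) := rfl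
@[simp] lemma wObjX_0 (V : ℤ → 𝒜) (B F C F' : 𝒜) : wObjX V B F C F' 0 = V 0 := rfl
@[simp] lemma wObjX_1 (V : ℤ → 𝒜) (B F C F' : 𝒜) : wObjX V B F C F' 1 = (B ⊞ F) := rfl
@[simp] lemma wObjX_2 (V : ℤ → 𝒜) (B F C F' : 𝒜) : wObjX V B F C F' 2 = (C ⊞ F') := rfl
@[simp] lemma wObjX_3 (V : ℤ → 𝒜) (B F C F' : 𝒜) : wObjX V B F C F' 3 = V 3 := rfl
@[simp] lemma wObjX_4 (V : ℤ → 𝒜) (B F C F' : 𝒜) : wObjX V B F C F' 4 = V 4 := rfl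
@[simp] lemma wObjY_m1 (V : ℤ → 𝒜) (B C : 𝒜) : wObjY V B C (-1) = V (-1) := rfl
@[simp] lemma wObjY_0 (V : ℤ → 𝒜) (B C : 𝒜) : wObjY V B C 0 = V 0 := rfl
@[simp] lemma wObjY_1 (V : ℤ → 𝒜) (B C : 𝒜) : wObjY V B C 1 = B := rfl
@[simp] lemma wObjY_2 (V : ℤ → 𝒜) (B C : 𝒜) : wObjY V B C 2 = C := rfl
@[simp] lemma wObjY_3 (V : ℤ → 𝒜) (B C : 𝒜) : wObjY V B C 3 = V 3 := rfl
@[simp] lemma wObjY_4 (V : ℤ → 𝒜) (B C : 𝒜) : wObjY V B C 4 = V 4 := rfl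
@[simp] lemma eqToHom_fun_self (X : 𝒜) : (@eqToHom 𝒜 _ X X) = fun _ => 𝟙 X := rfl
@[simp] lemma qmap_0 (V : ℤ → 𝒜) (B F C F' : 𝒜) (φ : F ⟶ F') [IsIso φ] :
    qmap V B F C F' φ 0 = (0 : B ⊞ F ⟶ V 0) := rfl
@[simp] lemma qmap_2 (V : ℤ → 𝒜) (B F C F' : 𝒜) (φ : F ⟶ F') [IsIso φ] :
    qmap V B F C F' φ 2 = (0 : V 3 ⟶ C ⊞ F') := rfl
@[simp] lemma qmap_3 (V : ℤ → 𝒜) (B F C F' : 𝒜) (φ : F ⟶ F') [IsIso φ] :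
    qmap V B F C F' φ 3 = (0 : V 4 ⟶ V 3) := rfl
@[simp] lemma qmap_1 (V : ℤ → 𝒜) (B F C F' : 𝒜) (φ : F ⟶ F') [IsIso φ] :
    qmap V B F C F' φ 1 =
      (biprod.lift (0 : C ⊞ F' ⟶ B) (biprod.desc (0 : C ⟶ F) (inv φ)) : C ⊞ F' ⟶ B ⊞ F) := by
  simp [qmap]

theorem statement_11 (V : ℤ → 𝒜) (dV : ∀ i, V i ⟶ V (i + 1)) (B F C F' : 𝒜)
    (a : V 0 ⟶ B) (b : V 0 ⟶ F) (c : B ⟶ C) (dm : B ⟶ F') (e : F ⟶ C)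
    (φ : F ⟶ F') [IsIso φ] (f : C ⟶ V 3) (g : F' ⟶ V 3)
    (hX : (Xcx V dV B F C F' a b c dm e φ f g).IsComplex) :
    -- `Y` is a cochain complex
    (Ycx V dV B F C F' a c dm e φ f).IsComplex ∧
    -- `α` and `β` are chain maps
    PreCx.IsChainMap (Xcx V dV B F C F' a b c dm e φ f g) (Ycx V dV B F C F' a c dm e φ f)
      (αmap V B F C F' e φ) ∧
    PreCx.IsChainMap (Ycx V dV B F C F' a c dm e φ f) (Xcx V dV B F C F' a b c dm e φ f g)
      (βmap V B F C F' dm φ) ∧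
    -- `α ∘ β = id_Y`
    (∀ i, βmap V B F C F' dm φ i ≫ αmap V B F C F' e φ i = 𝟙 (wObjY V B C i)) ∧
    -- `id_X − β ∘ α = d_X ∘ q + q ∘ d_X`
    (∀ i, 𝟙 (wObjX V B F C F' (i + 1)) -
        αmap V B F C F' e φ (i + 1) ≫ βmap V B F C F' dm φ (i + 1) =
      wdX V dV B F C F' a b c dm e φ f g (i + 1) ≫ qmap V B F C F' φ (i + 1) +
        qmap V B F C F' φ i ≫ wdX V dV B F C F' a b c dm e φ f g i) := by

  have hX0 := hX 0
  have hX1 := hX 1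
  have hX2 := hX 2
  have hXm := hX (-1)
  simp [PreCx.IsComplex, Xcx, wdX] at hX0 hX1 hX2 hXm
  have hac : a ≫ c = -(b ≫ e) := by
    have := hX0 =≫ biprod.fst; simp at this
    exact eq_neg_of_add_eq_zero_left (this.trans zero_comp)
  have had : a ≫ dm = -(b ≫ φ) := by
    have := hX0 =≫ biprod.snd; simp at this
    exact eq_neg_of_add_eq_zero_left (this.trans zero_comp)
  have hcf : c ≫ f = -(dm ≫ g) := by
    have := biprod.inl ≫= hX1; simp at this
    exact eq_neg_of_add_eq_zero_left (this.trans comp_zero)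
  have hef : e ≫ f = -(φ ≫ g) := by
    have := biprod.inr ≫= hX1; simp at this
    exact eq_neg_of_add_eq_zero_left (this.trans comp_zero)
  have hfd : f ≫ dV 3 = 0 := by
    have := biprod.inl ≫= hX2; simpa using this.trans comp_zero
  have hma : dV (-1) ≫ a = 0 := by
    have := hXm =≫ biprod.fst; simpa using this.trans zero_comp
  have hacr := reassoc_of% hac
  have hadr := reassoc_of% had
  have hcfr := reassoc_of% hcf
  have hefr := reassoc_of% hef
  have hdV : ∀ i : ℤ, i ≠ -1 → i ≠ 0 → i ≠ 1 → i ≠ 2 → dV i ≫ dV (i + 1) = 0 := by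
    intro i h1 h2 h3 h4
    have h := hX i
    simp only [Xcx] at h
    rw [wdX_gen V dV B F C F' a b c dm e φ f g h2 h3 h4,
      wdX_gen V dV B F C F' a b c dm e φ f g (by omega) (by omega) (by omega)] at h
    simpa using (h =≫ eqToHom (wObjX_eq V B F C F' (show i + 1 + 1 ≠ 1 by omega) (show i + 1 + 1 ≠ 2 by omega))).trans zero_comp
  refine ⟨?_, ?_, ?_, ?_, ?_⟩
  · intro i
    obtain rfl | rfl | rfl | rfl | ⟨h1, h2, h3, h4⟩ :
        i = -1 ∨ i = 0 ∨ i = 1 ∨ i = 2 ∨ (i ≠ -1 ∧ i ≠ 0 ∧ i ≠ 1 ∧ i ≠ 2) := by omega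
    · simp [Ycx, wdY, wObjX, wObjY]; exact hma
    · simp [Ycx, wdY, wObjX, wObjY, hac, hadr]; rfl
    · simp [Ycx, wdY, wObjX, wObjY, hcf, hef, Preadditive.sub_comp]; rfl
    · simp [Ycx, wdY, wObjX, wObjY]; exact hfd
    · simp only [Ycx]
      rw [wdY_gen V dV B F C F' a c dm e φ f h2 h3 h4,
        wdY_gen V dV B F C F' a c dm e φ f (by omega) (by omega) (by omega)]
      simp [reassoc_of% (hdV i h1 h2 h3 h4)]; rfl
  · intro i
    obtain rfl | rfl | rfl | rfl | ⟨h1, h2, h3, h4⟩ :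
        i = -1 ∨ i = 0 ∨ i = 1 ∨ i = 2 ∨ (i ≠ -1 ∧ i ≠ 0 ∧ i ≠ 1 ∧ i ≠ 2) := by omega
    · simp [Xcx, Ycx, wdX, wdY, wObjX, wObjY, αmap]
    · simp [Xcx, Ycx, wdX, wdY, wObjX, wObjY, αmap]
    · apply biprod.hom_ext' <;> simp [Xcx, Ycx, wdX, wdY, wObjX, wObjY, αmap, sub_eq_add_neg]
    · apply biprod.hom_ext' <;> simp [Xcx, Ycx, wdX, wdY, wObjX, wObjY, αmap, hef, hefr]
    · simp only [Xcx, Ycx, PreCx.IsChainMap]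
      rw [wdX_gen V dV B F C F' a b c dm e φ f g h2 h3 h4,
        wdY_gen V dV B F C F' a c dm e φ f h2 h3 h4,
        αmap_gen V B F C F' e φ h3 h4,
        αmap_gen V B F C F' e φ (by omega : i + 1 ≠ 1) (by omega : i + 1 ≠ 2)]
      simp
  · intro i
    obtain rfl | rfl | rfl | rfl | ⟨h1, h2, h3, h4⟩ :
        i = -1 ∨ i = 0 ∨ i = 1 ∨ i = 2 ∨ (i ≠ -1 ∧ i ≠ 0 ∧ i ≠ 1 ∧ i ≠ 2) := by omega
    · simp [Xcx, Ycx, wdX, wdY, wObjX, wObjY, βmap]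
    · apply biprod.hom_ext <;> simp [Xcx, Ycx, wdX, wdY, wObjX, wObjY, βmap, hadr, had]
    · apply biprod.hom_ext <;>
        simp [Xcx, Ycx, wdX, wdY, wObjX, wObjY, βmap, Preadditive.sub_comp, sub_eq_add_neg]
    · simp [Xcx, Ycx, wdX, wdY, wObjX, wObjY, βmap]
    · simp only [Xcx, Ycx, PreCx.IsChainMap]
      rw [wdX_gen V dV B F C F' a b c dm e φ f g h2 h3 h4,
        wdY_gen V dV B F C F' a c dm e φ f h2 h3 h4,
        βmap_gen V B F C F' dm φ h3 h4,
        βmap_gen V B F C F' dm φ (by omega : i + 1 ≠ 1) (by omega : i + 1 ≠ 2)]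
      simp
  · intro i
    obtain rfl | rfl | ⟨h3, h4⟩ : i = 1 ∨ i = 2 ∨ (i ≠ 1 ∧ i ≠ 2) := by omega
    · simp [αmap, βmap, wObjX, wObjY]
    · simp [αmap, βmap, wObjX, wObjY]
    · rw [αmap_gen V B F C F' e φ h3 h4, βmap_gen V B F C F' dm φ h3 h4]
      simp
  · intro i
    obtain rfl | rfl | rfl | ⟨h1, h2, h3⟩ :
        i = 0 ∨ i = 1 ∨ i = 2 ∨ (i ≠ 0 ∧ i ≠ 1 ∧ i ≠ 2) := by omega
    · apply biprod.hom_ext' <;> apply biprod.hom_ext <;>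
        simp +instances [αmap, βmap, qmap_0, qmap_1, qmap_2, qmap_3, wdX, wObjX, wObjY]
    · apply biprod.hom_ext' <;> apply biprod.hom_ext <;>
        simp +instances [αmap, βmap, qmap_0, qmap_1, qmap_2, qmap_3, wdX, wObjX, wObjY]
    · simp +instances [αmap, βmap, qmap_0, qmap_1, qmap_2, qmap_3, wdX, wObjX, wObjY]
    · rw [αmap_gen V B F C F' e φ (by omega : i + 1 ≠ 1) (by omega : i + 1 ≠ 2),
        βmap_gen V B F C F' dm φ (by omega : i + 1 ≠ 1) (by omega : i + 1 ≠ 2),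
        qmap_gen V B F C F' φ (by omega : i + 1 ≠ 1),
        qmap_gen V B F C F' φ h2]
      simp
end

section
/- Suppose a δ-pseudocomplex X of A-modules has, in four consecutive degrees, the form A → B ⊕ F → C ⊕ F' → D with differential components a : A → B, b : A → F, c : B → C, d : B → F', e : F → C, φ : F → F', f : C → D, g : F' → D, where φ is an isomorphism of A-modules. Let Y agree with X outside these degrees and in these degrees be A → B → C → D with differentials a, c − e∘φ^{−1}∘d, and f. Then: (i) Y is again a δ-pseudocomplex; (ii) the degreewise maps α : X → Y (identity outside the indicated degrees, (id_B, 0) on B⊕F, and (id_C, −e∘φ^{−1}) on C⊕F') and β : Y → X (identity outside, (id_B, −φ^{−1}∘d)ᵗ, and (id_C, 0)ᵗ) are pseudochain maps; (iii) α∘β = id_Y, and id_X − β∘α = d_X∘q + q∘d_X, where q : X → X of homological degree −1 is φ^{−1} : F' → F on the indicated summands and zero otherwise. -/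
/-!
STATEMENT 13 (Gaussian elimination for δ-pseudocomplexes of `A`-modules).
A δ-pseudocomplex `X` of `A`-modules (formalized in the category `ModuleCat A`,
where `B ⊞ F` is the product/direct sum of modules) which, in the four consecutive
degrees `0, 1, 2, 3`, has the form `A₀ ⟶ B ⊞ F ⟶ C ⊞ F' ⟶ D` (with `A₀ = V 0`,
`D = V 3`, and with arbitrary modules `V i` and differentials `dV i` elsewhere),
with differential components `a, b, c, dm, e, φ, f, g`, where `φ` is an
isomorphism of `A`-modules.
-/

open CategoryTheory CategoryTheory.Limits

universe v u

variable {𝒜 : Type u} [Category.{v} 𝒜] [Preadditive 𝒜] [HasBinaryBiproducts 𝒜]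

/-- `X` is a δ-pseudocomplex: for each `i` there is `μ` with `d ∘ d = δ • μ`. -/
def PreCx.IsPseudo {A : Type u} [CommRing A] (δ : A) (X : PreCx (ModuleCat.{u} A)) : Prop :=
  ∀ i, ∃ μ : X.obj i ⟶ X.obj (i + 1 + 1), X.d i ≫ X.d (i + 1) = δ • μ

/-- `α` is a pseudochain map from `X` to `Y`: for each `i` there is `ν` with
`d_Y ∘ α − α ∘ d_X = δ • ν`. -/
def PreCx.IsPseudoChainMap {A : Type u} [CommRing A] (δ : A)
    (X Y : PreCx (ModuleCat.{u} A)) (α : ∀ i, X.obj i ⟶ Y.obj i) : Prop :=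
  ∀ i, ∃ ν : X.obj i ⟶ Y.obj (i + 1), α i ≫ Y.d i - X.d i ≫ α (i + 1) = δ • ν

section Aux

variable (V : ℤ → 𝒜) (dV : ∀ i, V i ⟶ V (i + 1)) (B F C F' : 𝒜)
    (a : V 0 ⟶ B) (b : V 0 ⟶ F) (c : B ⟶ C) (dm : B ⟶ F') (e : F ⟶ C)
    (φ : F ⟶ F') [IsIso φ] (f : C ⟶ V 3) (g : F' ⟶ V 3)

lemma objX_eq {i : ℤ} (h1 : i ≠ 1) (h2 : i ≠ 2) : wObjX V B F C F' i = V i := by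
  unfold wObjX; rw [if_neg h1, if_neg h2]

lemma objY_eq {i : ℤ} (h1 : i ≠ 1) (h2 : i ≠ 2) : wObjY V B C i = V i := by
  unfold wObjY; rw [if_neg h1, if_neg h2]

lemma dX_gen {i : ℤ} (h0 : i ≠ 0) (h1 : i ≠ 1) (h2 : i ≠ 2) :
    wdX V dV B F C F' a b c dm e φ f g i =
      eqToHom (objX_eq V B F C F' h1 h2) ≫ dV i ≫
        eqToHom (objX_eq V B F C F' (i := i + 1) (by omega) (by omega)).symm := by
  rw [wdX, dif_neg h0, dif_neg h1, dif_neg h2]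

lemma dY_gen {i : ℤ} (h0 : i ≠ 0) (h1 : i ≠ 1) (h2 : i ≠ 2) :
    wdY V dV B F C F' a c dm e φ f i =
      eqToHom (objY_eq V B C h1 h2) ≫ dV i ≫
        eqToHom (objY_eq V B C (i := i + 1) (by omega) (by omega)).symm := by
  rw [wdY, dif_neg h0, dif_neg h1, dif_neg h2]

lemma α_gen {i : ℤ} (h1 : i ≠ 1) (h2 : i ≠ 2) :
    αmap V B F C F' e φ i =
      eqToHom ((objX_eq V B F C F' h1 h2).trans (objY_eq V B C h1 h2).symm) := by
  rw [αmap, dif_neg h1, dif_neg h2]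

lemma β_gen {i : ℤ} (h1 : i ≠ 1) (h2 : i ≠ 2) :
    βmap V B F C F' dm φ i =
      eqToHom ((objY_eq V B C h1 h2).trans (objX_eq V B F C F' h1 h2).symm) := by
  rw [βmap, dif_neg h1, dif_neg h2]

lemma q_gen {i : ℤ} (h : i ≠ 1) : qmap V B F C F' φ i = 0 := by
  rw [qmap, dif_neg h]

end Aux

set_option maxHeartbeats 1000000 in
theorem statement_13 {A : Type u} [CommRing A] (δ : A)
    (V : ℤ → ModuleCat.{u} A) (dV : ∀ i, V i ⟶ V (i + 1)) (B F C F' : ModuleCat.{u} A)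
    (a : V 0 ⟶ B) (b : V 0 ⟶ F) (c : B ⟶ C) (dm : B ⟶ F') (e : F ⟶ C)
    (φ : F ⟶ F') [IsIso φ] (f : C ⟶ V 3) (g : F' ⟶ V 3)
    (hX : (Xcx V dV B F C F' a b c dm e φ f g).IsPseudo δ) :
    -- (i) `Y` is again a δ-pseudocomplex
    (Ycx V dV B F C F' a c dm e φ f).IsPseudo δ ∧
    -- (ii) `α` and `β` are pseudochain maps
    PreCx.IsPseudoChainMap δ (Xcx V dV B F C F' a b c dm e φ f g)
      (Ycx V dV B F C F' a c dm e φ f) (αmap V B F C F' e φ) ∧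
    PreCx.IsPseudoChainMap δ (Ycx V dV B F C F' a c dm e φ f)
      (Xcx V dV B F C F' a b c dm e φ f g) (βmap V B F C F' dm φ) ∧
    -- (iii) `α ∘ β = id_Y` and `id_X − β ∘ α = d_X ∘ q + q ∘ d_X`
    (∀ i, βmap V B F C F' dm φ i ≫ αmap V B F C F' e φ i = 𝟙 (wObjY V B C i)) ∧
    (∀ i, 𝟙 (wObjX V B F C F' (i + 1)) -
        αmap V B F C F' e φ (i + 1) ≫ βmap V B F C F' dm φ (i + 1) =
      wdX V dV B F C F' a b c dm e φ f g (i + 1) ≫ qmap V B F C F' φ (i + 1) +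
        qmap V B F C F' φ i ≫ wdX V dV B F C F' a b c dm e φ f g i) := by
  obtain ⟨μ₀, hμ₀⟩ : ∃ μ : V 0 ⟶ (C ⊞ F' : ModuleCat A),
      biprod.lift a b ≫ biprod.lift (biprod.desc c e) (biprod.desc dm φ) = δ • μ := hX 0
  obtain ⟨μ₁, hμ₁⟩ : ∃ μ : (B ⊞ F : ModuleCat A) ⟶ V 3,
      biprod.lift (biprod.desc c e) (biprod.desc dm φ) ≫ biprod.desc f g = δ • μ := hX 1
  obtain ⟨μ₂, hμ₂⟩ : ∃ μ : (C ⊞ F' : ModuleCat A) ⟶ V (3 + 1),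
      biprod.desc f g ≫ dV 3 = δ • μ := hX 2
  obtain ⟨μₘ, hμₘ⟩ : ∃ μ : V (-1) ⟶ (B ⊞ F : ModuleCat A),
      dV (-1) ≫ biprod.lift a b = δ • μ := by with_unfolding_all exact hX (-1)
  have hac : a ≫ c = δ • (μ₀ ≫ biprod.fst) - b ≫ e := by
    have := congrArg (· ≫ (biprod.fst : (C ⊞ F' : ModuleCat A) ⟶ C)) hμ₀
    simp only [Category.assoc, biprod.lift_fst, biprod.lift_desc, Linear.smul_comp] at this
    rw [← this]; abel
  have had : a ≫ dm = δ • (μ₀ ≫ biprod.snd) - b ≫ φ := by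
    have := congrArg (· ≫ (biprod.snd : (C ⊞ F' : ModuleCat A) ⟶ F')) hμ₀
    simp only [Category.assoc, biprod.lift_snd, biprod.lift_desc, Linear.smul_comp] at this
    rw [← this]; abel
  have hcf : c ≫ f = δ • (biprod.inl ≫ μ₁) - dm ≫ g := by
    have := congrArg (((biprod.inl : B ⟶ (B ⊞ F : ModuleCat A)) ≫ ·)) hμ₁
    simp only [biprod.lift_desc, Preadditive.comp_add, biprod.inl_desc_assoc,
      Linear.comp_smul] at this
    rw [← this]; abel
  have hef : e ≫ f = δ • (biprod.inr ≫ μ₁) - φ ≫ g := by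
    have := congrArg ((biprod.inr : F ⟶ (B ⊞ F : ModuleCat A)) ≫ ·) hμ₁
    simp only [biprod.lift_desc, Preadditive.comp_add, biprod.inr_desc_assoc,
      Linear.comp_smul] at this
    rw [← this]; abel
  have hfd : f ≫ dV 3 = δ • (biprod.inl ≫ μ₂) := by
    have := congrArg ((biprod.inl : C ⟶ (C ⊞ F' : ModuleCat A)) ≫ ·) hμ₂
    simpa only [biprod.inl_desc_assoc, Linear.comp_smul] using this
  have hda : dV (-1) ≫ a = δ • (μₘ ≫ biprod.fst) := by
    have := congrArg (· ≫ (biprod.fst : (B ⊞ F : ModuleCat A) ⟶ B)) hμₘ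
    simpa only [Category.assoc, biprod.lift_fst, Linear.smul_comp] using this
  have hIsIso : IsIso φ := inferInstance
  refine ⟨?_, ?_, ?_, ?_, ?_⟩
  · -- (i)
    intro i
    by_cases hm1 : i = -1
    · subst hm1
      refine ⟨μₘ ≫ biprod.fst, ?_⟩
      show wdY V dV B F C F' a c dm e φ f (-1) ≫ wdY V dV B F C F' a c dm e φ f (-1+1) = _
      simp only [wdY]
      norm_num
      exact hda
    by_cases h0 : i = 0
    · subst h0
      refine ⟨μ₀ ≫ biprod.fst - μ₀ ≫ biprod.snd ≫ inv φ ≫ e, ?_⟩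
      show wdY V dV B F C F' a c dm e φ f 0 ≫ wdY V dV B F C F' a c dm e φ f (0+1) = _
      simp only [wdY]
      norm_num
      erw [eqToHom_refl, Category.id_comp, Category.id_comp, Category.comp_id, Category.comp_id]
      suffices h : a ≫ c - a ≫ dm ≫ inv φ ≫ e = δ • (μ₀ ≫ biprod.fst - μ₀ ≫ biprod.snd ≫ inv φ ≫ e) by
        exact h
      rw [hac, show a ≫ dm ≫ inv φ ≫ e = (a ≫ dm) ≫ (inv φ ≫ e) by simp, had]
      simp only [Preadditive.sub_comp, Linear.smul_comp, Category.assoc,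
        IsIso.hom_inv_id_assoc, smul_sub]
      module
    by_cases h1 : i = 1
    · subst h1
      refine ⟨biprod.inl ≫ μ₁ - dm ≫ inv φ ≫ biprod.inr ≫ μ₁, ?_⟩
      show wdY V dV B F C F' a c dm e φ f 1 ≫ wdY V dV B F C F' a c dm e φ f (1+1) = _
      simp only [wdY]
      norm_num
      erw [eqToHom_refl, Category.id_comp, Category.id_comp, Category.comp_id]
      suffices h : c ≫ f - dm ≫ inv φ ≫ e ≫ f = δ • (biprod.inl ≫ μ₁ - dm ≫ inv φ ≫ biprod.inr ≫ μ₁) by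
        exact h
      rw [hcf, hef]
      simp only [Preadditive.comp_sub, Linear.comp_smul, Category.assoc,
        IsIso.inv_hom_id_assoc, smul_sub]
      module
    by_cases h2 : i = 2
    · subst h2
      refine ⟨biprod.inl ≫ μ₂, ?_⟩
      show wdY V dV B F C F' a c dm e φ f 2 ≫ wdY V dV B F C F' a c dm e φ f (2+1) = _
      simp only [wdY]
      norm_num
      exact hfd
    -- generic case
    obtain ⟨μ, hμ⟩ := hX i
    change wObjX V B F C F' i ⟶ wObjX V B F C F' (i + 1 + 1) at μ
    replace hμ : wdX V dV B F C F' a b c dm e φ f g i ≫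
        wdX V dV B F C F' a b c dm e φ f g (i + 1) = δ • μ := hμ
    rw [dX_gen V dV B F C F' a b c dm e φ f g h0 h1 h2,
      dX_gen V dV B F C F' a b c dm e φ f g (show i + 1 ≠ 0 by omega)
        (show i + 1 ≠ 1 by omega) (show i + 1 ≠ 2 by omega)] at hμ
    simp only [Category.assoc, eqToHom_trans_assoc, eqToHom_refl, Category.id_comp] at hμ
    have key : dV i ≫ dV (i + 1) =
        eqToHom (objX_eq V B F C F' h1 h2).symm ≫ (δ • μ) ≫
          eqToHom (objX_eq V B F C F' (i := i + 1 + 1) (by omega) (by omega)) := by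
      rw [← hμ]; simp
    refine ⟨eqToHom ((objY_eq V B C h1 h2).trans (objX_eq V B F C F' h1 h2).symm) ≫ μ ≫
      eqToHom ((objX_eq V B F C F' (i := i + 1 + 1) (by omega) (by omega)).trans
        (objY_eq V B C (i := i + 1 + 1) (by omega) (by omega)).symm), ?_⟩
    show wdY V dV B F C F' a c dm e φ f i ≫ wdY V dV B F C F' a c dm e φ f (i+1) = _
    rw [dY_gen V dV B F C F' a c dm e φ f h0 h1 h2,
      dY_gen V dV B F C F' a c dm e φ f (show i + 1 ≠ 0 by omega)
        (show i + 1 ≠ 1 by omega) (show i + 1 ≠ 2 by omega)]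
    simp only [Category.assoc, eqToHom_trans_assoc, eqToHom_refl, Category.id_comp]
    rw [reassoc_of% key]
    simp [Linear.smul_comp, Linear.comp_smul]
    rfl
  · -- (ii) α
    intro i
    by_cases h0 : i = 0
    · subst h0
      refine ⟨0, ?_⟩
      show 𝟙 (V 0) ≫ a - biprod.lift a b ≫ biprod.fst = δ • (0 : V 0 ⟶ B)
      simp
    by_cases h1 : i = 1
    · subst h1
      refine ⟨0, ?_⟩
      show (biprod.fst : (B ⊞ F) ⟶ B) ≫ (c - dm ≫ inv φ ≫ e) -
        biprod.lift (biprod.desc c e) (biprod.desc dm φ) ≫ biprod.desc (𝟙 C) (-(inv φ ≫ e)) =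
          δ • (0 : (B ⊞ F) ⟶ C)
      apply biprod.hom_ext' <;> simp <;> abel
    by_cases h2 : i = 2
    · subst h2
      refine ⟨biprod.desc 0 (-(inv φ ≫ biprod.inr ≫ μ₁)), ?_⟩
      show biprod.desc (𝟙 C) (-(inv φ ≫ e)) ≫ f - biprod.desc f g ≫ 𝟙 (V 3) =
        δ • (biprod.desc 0 (-(inv φ ≫ biprod.inr ≫ μ₁)) : (C ⊞ F') ⟶ V 3)
      apply biprod.hom_ext' <;> simp [hef]
    · refine ⟨0, ?_⟩
      show αmap V B F C F' e φ i ≫ wdY V dV B F C F' a c dm e φ f i -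
        wdX V dV B F C F' a b c dm e φ f g i ≫ αmap V B F C F' e φ (i+1) = _
      rw [α_gen V B F C F' e φ h1 h2,
        α_gen V B F C F' e φ (show i+1 ≠ 1 by omega) (show i+1 ≠ 2 by omega),
        dX_gen V dV B F C F' a b c dm e φ f g h0 h1 h2,
        dY_gen V dV B F C F' a c dm e φ f h0 h1 h2]
      simp
      rfl
  · -- (ii) β
    intro i
    by_cases h0 : i = 0
    · subst h0
      refine ⟨biprod.lift 0 (μ₀ ≫ biprod.snd ≫ inv φ), ?_⟩
      show 𝟙 (V 0) ≫ biprod.lift a b - a ≫ biprod.lift (𝟙 B) (-(dm ≫ inv φ)) =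
        δ • (biprod.lift 0 (μ₀ ≫ biprod.snd ≫ inv φ) : V 0 ⟶ (B ⊞ F))
      apply biprod.hom_ext <;> simp
      rw [show a ≫ dm ≫ inv φ = (a ≫ dm) ≫ inv φ by simp, had]
      simp [Preadditive.sub_comp, Linear.smul_comp, Category.assoc]
    by_cases h1 : i = 1
    · subst h1
      refine ⟨0, ?_⟩
      suffices h : biprod.lift (𝟙 B) (-(dm ≫ inv φ)) ≫ biprod.lift (biprod.desc c e) (biprod.desc dm φ) -
        (c - dm ≫ inv φ ≫ e) ≫ biprod.lift (𝟙 C) 0 = δ • (0 : B ⟶ (C ⊞ F')) by exact h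
      apply biprod.hom_ext <;> simp
    by_cases h2 : i = 2
    · subst h2
      refine ⟨0, ?_⟩
      show biprod.lift (𝟙 C) 0 ≫ biprod.desc f g - f ≫ 𝟙 (V 3) = δ • (0 : C ⟶ V 3)
      simp
    · refine ⟨0, ?_⟩
      show βmap V B F C F' dm φ i ≫ wdX V dV B F C F' a b c dm e φ f g i -
        wdY V dV B F C F' a c dm e φ f i ≫ βmap V B F C F' dm φ (i+1) = _
      rw [β_gen V B F C F' dm φ h1 h2,
        β_gen V B F C F' dm φ (show i+1 ≠ 1 by omega) (show i+1 ≠ 2 by omega),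
        dX_gen V dV B F C F' a b c dm e φ f g h0 h1 h2,
        dY_gen V dV B F C F' a c dm e φ f h0 h1 h2]
      simp
      rfl
  · -- (iii) β ≫ α = id
    intro i
    by_cases h1 : i = 1
    · subst h1
      show biprod.lift (𝟙 B) (-(dm ≫ inv φ)) ≫ biprod.fst = 𝟙 B
      simp
    by_cases h2 : i = 2
    · subst h2
      show biprod.lift (𝟙 C) 0 ≫ biprod.desc (𝟙 C) (-(inv φ ≫ e)) = 𝟙 C
      simp
    · rw [α_gen V B F C F' e φ h1 h2, β_gen V B F C F' dm φ h1 h2]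
      simp
  · -- (iii) homotopy
    intro i
    by_cases h0 : i = 0
    · subst h0
      suffices h : 𝟙 (B ⊞ F) - biprod.fst ≫ biprod.lift (𝟙 B) (-(dm ≫ inv φ)) =
        biprod.lift (biprod.desc c e) (biprod.desc dm φ) ≫
          biprod.lift (0 : (C ⊞ F') ⟶ B) (biprod.desc (0 : C ⟶ F) (inv φ)) +
        (0 : (B ⊞ F) ⟶ V 0) ≫ biprod.lift a b by exact h
      apply biprod.hom_ext' <;> apply biprod.hom_ext <;> simp
    by_cases h1 : i = 1
    · subst h1
      suffices h : 𝟙 (C ⊞ F') - biprod.desc (𝟙 C) (-(inv φ ≫ e)) ≫ biprod.lift (𝟙 C) 0 =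
        biprod.desc f g ≫ (0 : V 3 ⟶ (C ⊞ F')) +
        biprod.lift (0 : (C ⊞ F') ⟶ B) (biprod.desc (0 : C ⟶ F) (inv φ)) ≫
          biprod.lift (biprod.desc c e) (biprod.desc dm φ) by exact h
      apply biprod.hom_ext' <;> apply biprod.hom_ext <;> simp
    · rw [α_gen V B F C F' e φ (show i+1 ≠ 1 by omega) (show i+1 ≠ 2 by omega),
        β_gen V B F C F' dm φ (show i+1 ≠ 1 by omega) (show i+1 ≠ 2 by omega),
        q_gen V B F C F' φ (show i+1 ≠ 1 by omega), q_gen V B F C F' φ h1]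
      simp
end

section
/- Let X and Y be δ-pseudocomplexes of A-modules with monodromies μ_X and μ_Y, and let f : X → Y be a pseudochain map with d_Y^i ∘ f^i − f^{i+1} ∘ d_X^i = δ • ν^i for all i. Assume that multiplication by δ is injective on each module Y^j. Then for every i one has μ_Y^i ∘ f^i − f^{i+2} ∘ μ_X^i = d_Y^{i+1} ∘ ν^i + ν^{i+1} ∘ d_X^i; that is, f ∘ μ_X and μ_Y ∘ f are chain homotopic via the homotopy ν. Moreover, if multiplication by δ is injective on each module X^j, then the monodromy μ_X is uniquely determined by the differential d_X. -/
/-!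
STATEMENT 14.  `A` is a commutative ring, `δ ∈ A`.  A δ-pseudocomplex is a family
`X i` of `A`-modules with `A`-linear maps `dX i : X i → X (i+1)` such that
`dX (i+1) ∘ dX i = δ • μX i` for a family of maps `μX i : X i → X (i+1+1)`
(a monodromy for `X`).  A pseudochain map `f : X → Y` comes with maps `ν i`
witnessing `dY ∘ f − f ∘ dX = δ • ν`.
-/

theorem statement_14 {A : Type*} [CommRing A] (δ : A)
    (X Y : ℤ → Type*)
    [∀ i, AddCommGroup (X i)] [∀ i, Module A (X i)]
    [∀ i, AddCommGroup (Y i)] [∀ i, Module A (Y i)]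
    (dX : ∀ i, X i →ₗ[A] X (i + 1)) (dY : ∀ i, Y i →ₗ[A] Y (i + 1))
    -- monodromies for `X` and `Y`
    (μX : ∀ i, X i →ₗ[A] X (i + 1 + 1)) (μY : ∀ i, Y i →ₗ[A] Y (i + 1 + 1))
    (hμX : ∀ i, (dX (i + 1)).comp (dX i) = δ • μX i)
    (hμY : ∀ i, (dY (i + 1)).comp (dY i) = δ • μY i)
    -- a pseudochain map `f : X → Y` together with its witnesses `ν`
    (f : ∀ i, X i →ₗ[A] Y i)
    (ν : ∀ i, X i →ₗ[A] Y (i + 1))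
    (hν : ∀ i, (dY i).comp (f i) - (f (i + 1)).comp (dX i) = δ • ν i)
    -- multiplication by `δ` is injective on each `Y j`
    (hinjY : ∀ j, Function.Injective (fun y : Y j => δ • y)) :
    -- `μ_Y ∘ f − f ∘ μ_X = d_Y ∘ ν + ν ∘ d_X`, i.e. `f ∘ μ_X ≃ μ_Y ∘ f` via `ν`
    (∀ i, (μY i).comp (f i) - (f (i + 1 + 1)).comp (μX i) =
      (dY (i + 1)).comp (ν i) + (ν (i + 1)).comp (dX i)) ∧
    -- moreover, if multiplication by `δ` is injective on each `X j`,
    -- the monodromy of `X` is uniquely determined by the differential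
    ((∀ j, Function.Injective (fun x : X j => δ • x)) →
      ∀ μX' : ∀ i, X i →ₗ[A] X (i + 1 + 1),
        (∀ i, (dX (i + 1)).comp (dX i) = δ • μX' i) → ∀ i, μX' i = μX i) := by
  have hν' : ∀ i (x : X i), dY i (f i x) - f (i + 1) (dX i x) = δ • ν i x := by
    intro i x
    simpa using LinearMap.ext_iff.mp (hν i) x
  have hμX' : ∀ i (x : X i), dX (i + 1) (dX i x) = δ • μX i x := by
    intro i x
    simpa using LinearMap.ext_iff.mp (hμX i) x
  have hμY' : ∀ i (y : Y i), dY (i + 1) (dY i y) = δ • μY i y := by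
    intro i y
    simpa using LinearMap.ext_iff.mp (hμY i) y
  constructor
  · intro i
    ext x
    apply hinjY (i + 1 + 1)
    simp only
    have h1 := hν' i x
    have h2 := hν' (i + 1) (dX i x)
    calc δ • (μY i (f i x) - f (i + 1 + 1) (μX i x))
        = dY (i + 1) (dY i (f i x)) - f (i + 1 + 1) (dX (i + 1) (dX i x)) := by
          rw [hμY', hμX']
          rw [smul_sub, map_smul]
      _ = dY (i + 1) (δ • ν i x) + (dY (i + 1) (f (i + 1) (dX i x))
            - f (i + 1 + 1) (dX (i + 1) (dX i x))) := by
          rw [← h1]; rw [map_sub]; abel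
      _ = δ • (dY (i + 1) (ν i x) + ν (i + 1) (dX i x)) := by
          rw [h2, map_smul, smul_add]
  · intro hinjX μX' hμX'' i
    ext x
    apply hinjX (i + 1 + 1)
    simp only
    have := LinearMap.ext_iff.mp (hμX'' i) x
    simp only [LinearMap.comp_apply, LinearMap.smul_apply] at this
    rw [← this, hμX' i x]
end

section
/- The sets Y_1, Y_2, …, Y_n are pairwise disjoint and their union is all of P. -/
/-- `P_k` collected into a single set of pairs `(X, k)`: `X` is a proper subset of
`{0, 1, …, n−1}`, `|X| ≤ n−1−|k|`, and `n−1−k−|X|` is even. -/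
def Pset (n : ℕ) : Set (Finset (Fin n) × ℤ) :=
  {q | q.1 ≠ Finset.univ ∧ (q.1.card : ℤ) ≤ (n : ℤ) - 1 - |q.2| ∧
       Even ((n : ℤ) - 1 - q.2 - q.1.card)}

/-- `U_m`: the pairs `(X, k) ∈ P` with `k = n−1−|X|−2m`. -/
def Uset (n : ℕ) (m : ℕ) : Set (Finset (Fin n) × ℤ) :=
  {q | q ∈ Pset n ∧ q.2 = (n : ℤ) - 1 - q.1.card - 2 * m}

/-- `Y_p` (for `1 ≤ p ≤ n`): the pairs `(X, k) ∈ U_m` (for some `m`) with `p−1 ∉ X`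
and `|X ∩ {0, 1, …, p−2}| = p−1−m`. -/
def Yset (n : ℕ) (p : ℕ) : Set (Finset (Fin n) × ℤ) :=
  {q | ∃ m : ℕ, q ∈ Uset n m ∧ (∀ x ∈ q.1, (x : ℕ) ≠ p - 1) ∧
       ((q.1.filter (fun x : Fin n => (x : ℕ) < p - 1)).card : ℤ) = (p : ℤ) - 1 - m}

namespace S16

variable {n : ℕ}

/-- Count of elements of `X` with value `< j`. -/
def g (X : Finset (Fin n)) (j : ℕ) : ℕ := (X.filter fun x : Fin n => (x : ℕ) < j).card

/-- `h X j = j - g X j`. -/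
def h (X : Finset (Fin n)) (j : ℕ) : ℤ := (j : ℤ) - g X j

lemma h_zero (X : Finset (Fin n)) : h X 0 = 0 := by simp [h, g]

lemma g_succ (X : Finset (Fin n)) (j : ℕ) :
    g X (j + 1) = g X j + (X.filter fun x : Fin n => (x : ℕ) = j).card := by
  classical
  unfold g
  rw [← Finset.card_union_of_disjoint, ← Finset.filter_or]
  · apply congrArg Finset.card
    apply Finset.filter_congr
    intro x _
    simp [Nat.lt_succ_iff_lt_or_eq]
    exact le_iff_lt_or_eq
  · rw [Finset.disjoint_left]
    intro a h1 h2
    simp only [Finset.mem_filter] at h1 h2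
    omega

lemma card_filter_eq_le (X : Finset (Fin n)) (j : ℕ) :
    (X.filter fun x : Fin n => (x : ℕ) = j).card ≤ 1 := by
  apply Finset.card_le_one.mpr
  intro a ha b hb
  simp only [Finset.mem_filter] at ha hb
  exact Fin.ext (ha.2.trans hb.2.symm)

lemma filter_card_of_mem (X : Finset (Fin n)) {j : ℕ} (hj : j < n)
    (hm : (⟨j, hj⟩ : Fin n) ∈ X) :
    (X.filter fun x : Fin n => (x : ℕ) = j).card = 1 := by
  refine le_antisymm (card_filter_eq_le X j) ?_
  exact Finset.card_pos.mpr ⟨⟨j, hj⟩, by simp [hm]⟩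

lemma filter_card_of_not_mem (X : Finset (Fin n)) {j : ℕ} (hj : j < n)
    (hm : (⟨j, hj⟩ : Fin n) ∉ X) :
    (X.filter fun x : Fin n => (x : ℕ) = j).card = 0 := by
  rw [Finset.card_eq_zero, Finset.filter_eq_empty_iff]
  intro x hx hxj
  have : x = (⟨j, hj⟩ : Fin n) := Fin.ext hxj
  exact hm (this ▸ hx)

lemma h_succ_ge (X : Finset (Fin n)) (j : ℕ) : h X j ≤ h X (j + 1) := by
  have := card_filter_eq_le X j
  simp only [h, g_succ]
  push_cast
  omega

lemma h_succ_le (X : Finset (Fin n)) (j : ℕ) : h X (j + 1) ≤ h X j + 1 := by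
  simp only [h, g_succ]
  push_cast
  omega

lemma h_mono (X : Finset (Fin n)) : Monotone (h X) :=
  monotone_nat_of_le_succ (h_succ_ge X)

lemma h_n (X : Finset (Fin n)) : h X n = (n : ℤ) - X.card := by
  have : X.filter (fun x : Fin n => (x : ℕ) < n) = X :=
    Finset.filter_true_of_mem (fun x _ => x.isLt)
  simp [h, g, this]

lemma ivl (X : Finset (Fin n)) :
    ∀ N : ℕ, ∀ m : ℤ, 0 ≤ m → m ≤ h X N → ∃ j ≤ N, h X j = m := by
  intro N
  induction N with
  | zero =>
    intro m h0 h1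
    rw [h_zero] at h1
    exact ⟨0, le_refl 0, by rw [h_zero]; omega⟩
  | succ N ih =>
    intro m h0 h1
    by_cases hc : m ≤ h X N
    · obtain ⟨j, hj, hh⟩ := ih m h0 hc
      exact ⟨j, by omega, hh⟩
    · have := h_succ_le X N
      exact ⟨N + 1, le_refl _, by omega⟩

lemma key (X : Finset (Fin n)) (m : ℕ) {p q : ℕ} (hp : 1 ≤ p) (hpq : p < q) (hqn : q ≤ n)
    (h1 : ∀ x ∈ X, (x : ℕ) ≠ p - 1)
    (hc1 : ((X.filter (fun x : Fin n => (x : ℕ) < p - 1)).card : ℤ) = (p : ℤ) - 1 - m)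
    (hc2 : ((X.filter (fun x : Fin n => (x : ℕ) < q - 1)).card : ℤ) = (q : ℤ) - 1 - m) :
    False := by
  have hj1n : p - 1 < n := by omega
  have hnot : (⟨p - 1, hj1n⟩ : Fin n) ∉ X := fun hm => h1 _ hm rfl
  have e1 : h X (p - 1) = (m : ℤ) := by
    simp only [h, g]
    omega
  have e3 : h X (q - 1) = (m : ℤ) := by
    simp only [h, g]
    omega
  have e2 : h X (p - 1 + 1) = h X (p - 1) + 1 := by
    simp only [h, g_succ, filter_card_of_not_mem X hj1n hnot]
    push_cast
    ring
  have e4 : h X (p - 1 + 1) ≤ h X (q - 1) := h_mono X (by omega)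
  omega

end S16

theorem statement_16 (n : ℕ) (hn : 2 ≤ n) :
    -- the sets `Y_1, …, Y_n` are pairwise disjoint …
    (∀ p q : ℕ, 1 ≤ p → p ≤ n → 1 ≤ q → q ≤ n → p ≠ q → Disjoint (Yset n p) (Yset n q)) ∧
    -- … and their union is all of `P`
    (⋃ p ∈ Set.Icc 1 n, Yset n p) = Pset n := by
  classical
  constructor
  · intro p q hp hpn hq hqn hne
    rw [Set.disjoint_left]
    rintro ⟨X, k⟩ hP hQ
    obtain ⟨m1, ⟨_, hk1⟩, hx1, hc1⟩ := hP
    obtain ⟨m2, ⟨_, hk2⟩, hx2, hc2⟩ := hQ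
    simp only at hk1 hk2 hx1 hx2 hc1 hc2
    have hm : (m1 : ℤ) = (m2 : ℤ) := by omega
    rcases hne.lt_or_gt with hlt | hlt
    · exact S16.key X m1 hp hlt hqn hx1 hc1 (by rw [hc2]; omega)
    · exact S16.key X m1 hq hlt hpn hx2 (by rw [hc2]; omega) hc1
  · ext a
    obtain ⟨X, k⟩ := a
    simp only [Set.mem_iUnion, Set.mem_Icc]
    constructor
    · rintro ⟨p, _, m, ⟨hP, _⟩, _⟩
      exact hP
    · rintro hP
      obtain ⟨hne, hle, heven⟩ := hP
      simp only at hne hle heven ⊢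
      obtain ⟨r, hr⟩ := heven
      have habs1 : k ≤ |k| := le_abs_self k
      have habs2 : -k ≤ |k| := neg_le_abs k
      have hr0 : 0 ≤ r := by omega
      set m : ℕ := r.toNat with hmdef
      have hm : (m : ℤ) = r := Int.toNat_of_nonneg hr0
      have hmub : (m : ℤ) ≤ (n : ℤ) - 1 - X.card := by omega
      have hhn := S16.h_n X
      obtain ⟨j, hjn, hj⟩ := S16.ivl X n (m : ℤ) (by omega) (by omega)
      set j0 := Nat.findGreatest (fun j => S16.h X j = (m : ℤ)) n with hj0def
      have hspec : S16.h X j0 = (m : ℤ) := Nat.findGreatest_spec (P := fun j => S16.h X j = (m : ℤ)) hjn hj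
      have hj0n : j0 ≤ n := Nat.findGreatest_le n
      have hj0lt : j0 < n := by
        rcases lt_or_eq_of_le hj0n with h | h
        · exact h
        · rw [h, hhn] at hspec; omega
      have hnext : ¬ S16.h X (j0 + 1) = (m : ℤ) :=
        Nat.findGreatest_is_greatest (Nat.lt_succ_self j0) (by omega)
      have hnotmem : (⟨j0, hj0lt⟩ : Fin n) ∉ X := by
        intro hmem
        apply hnext
        unfold S16.h
        rw [S16.g_succ, S16.filter_card_of_mem X hj0lt hmem]
        simp only [S16.g]
        simp only [S16.h, S16.g] at hspec
        push_cast
        omega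
      refine ⟨j0 + 1, ⟨by omega, by omega⟩, m, ⟨⟨hne, hle, ⟨r, hr⟩⟩, by simp only; omega⟩,
        ?_, ?_⟩
      · intro x hx hxe
        simp only [Nat.add_sub_cancel] at hxe
        have : x = (⟨j0, hj0lt⟩ : Fin n) := Fin.ext hxe
        exact hnotmem (this ▸ hx)
      · simp only [Nat.add_sub_cancel]
        simp only [S16.h, S16.g] at hspec
        push_cast
        omega
end

section
/- There exists a group homomorphism flat : Br_extg → B_n with flat(f_i) = σ_i for 1 ≤ i ≤ n−1 and flat(ω) = σ_1 σ_2 ⋯ σ_{n−1}; it necessarily satisfies flat(f_0) = σ_{n−1}^{−1} ⋯ σ_2^{−1} · σ_1 · σ_2 ⋯ σ_{n−1}. Under this homomorphism, flat(y_n) = 1 and, for 1 ≤ i ≤ n−1, flat(y_i) = j_i := σ_i σ_{i+1} ⋯ σ_{n−1} · σ_{n−1} ⋯ σ_{i+1} σ_i (the i-th rightward Jucys–Murphy braid); consequently flat(ω^n) = j_1 j_2 ⋯ j_{n−1} is the full twist braid (σ_1 σ_2 ⋯ σ_{n−1})^n. -/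
/-- Generators of the cylindrical braid group: `f i` for `i ∈ ℤ/nℤ`, and `ω`. -/
inductive ExtGen (n : ℕ) : Type
  | f : ZMod n → ExtGen n
  | om : ExtGen n

open FreeGroup in
/-- The defining relations of the cylindrical braid group `Br_extg`:
`f_i f_{i+1} f_i = f_{i+1} f_i f_{i+1}` (imposed only when `n ≥ 3`),
`f_i f_j = f_j f_i` for `j ∉ {i−1, i, i+1}`, and `ω f_i ω⁻¹ = f_{i+1}`. -/
def extRels (n : ℕ) : Set (FreeGroup (ExtGen n)) :=
  {r | (∃ i : ZMod n, 3 ≤ n ∧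
          r = of (ExtGen.f i) * of (ExtGen.f (i + 1)) * of (ExtGen.f i) *
              (of (ExtGen.f (i + 1)) * of (ExtGen.f i) * of (ExtGen.f (i + 1)))⁻¹) ∨
       (∃ i j : ZMod n, j ≠ i - 1 ∧ j ≠ i ∧ j ≠ i + 1 ∧
          r = of (ExtGen.f i) * of (ExtGen.f j) * (of (ExtGen.f j) * of (ExtGen.f i))⁻¹) ∨
       (∃ i : ZMod n,
          r = of ExtGen.om * of (ExtGen.f i) * (of ExtGen.om)⁻¹ * (of (ExtGen.f (i + 1)))⁻¹)}

/-- The cylindrical braid group `Br_extg`. -/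
abbrev BrExt (n : ℕ) : Type := PresentedGroup (extRels n)

/-- The generator `f_i` of `Br_extg`. -/
def fB (n : ℕ) (i : ZMod n) : BrExt n := PresentedGroup.of (ExtGen.f i)

/-- The generator `ω` of `Br_extg`. -/
def omB (n : ℕ) : BrExt n := PresentedGroup.of ExtGen.om

/-- `y_i = f_{i−1}⁻¹ ⋯ f_2⁻¹ f_1⁻¹ · ω · f_{n−1} f_{n−2} ⋯ f_{i+1} f_i`, for `1 ≤ i ≤ n`. -/
def yB (n : ℕ) (i : ℕ) : BrExt n :=
  (((List.range (i - 1)).reverse.map (fun k => (fB n ((k + 1 : ℕ) : ZMod n))⁻¹)).prod)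
    * omB n *
  (((List.range (n - i)).map (fun k => fB n ((n - 1 - k : ℕ) : ZMod n))).prod)

/-- `w_λ = y_1^{x_1} y_2^{x_2} ⋯ y_n^{x_n}` for `λ = (x_1, …, x_n) ∈ ℤ^n`. -/
def wB (n : ℕ) (lam : Fin n → ℤ) : BrExt n :=
  (List.ofFn (fun k : Fin n => yB n ((k : ℕ) + 1) ^ lam k)).prod

open FreeGroup in
/-- The defining relations of the Artin braid group `B_n` on the generators
`σ_1, …, σ_{n−1}` (the index `k : Fin (n−1)` stands for `σ_{k+1}`):
`σ_i σ_{i+1} σ_i = σ_{i+1} σ_i σ_{i+1}` and `σ_i σ_j = σ_j σ_i` for `|i−j| ≥ 2`. -/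
def artinRels (n : ℕ) : Set (FreeGroup (Fin (n - 1))) :=
  {r | (∃ i j : Fin (n - 1), (i : ℕ) + 1 = (j : ℕ) ∧
          r = of i * of j * of i * (of j * of i * of j)⁻¹) ∨
       (∃ i j : Fin (n - 1), (i : ℕ) + 2 ≤ (j : ℕ) ∧
          r = of i * of j * (of j * of i)⁻¹)}

/-- The Artin braid group `B_n` on `n` strands. -/
abbrev ArtinB (n : ℕ) : Type := PresentedGroup (artinRels n)

/-- The generator `σ_i` of `B_n`, for `1 ≤ i ≤ n−1` (and `1` for other values of `i`). -/
def sgA (n : ℕ) (i : ℕ) : ArtinB n :=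
  if h : 1 ≤ i ∧ i ≤ n - 1 then PresentedGroup.of (⟨i - 1, by omega⟩ : Fin (n - 1)) else 1

/-- `σ_1 σ_2 ⋯ σ_{n−1}`. -/
def halfTwist (n : ℕ) : ArtinB n := ((List.range (n - 1)).map (fun t => sgA n (t + 1))).prod

/-- The `i`-th rightward Jucys–Murphy braid
`j_i = σ_i σ_{i+1} ⋯ σ_{n−1} · σ_{n−1} ⋯ σ_{i+1} σ_i`. -/
def jmB (n : ℕ) (i : ℕ) : ArtinB n :=
  (((List.range (n - i)).map (fun t => sgA n (i + t))).prod) *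
  (((List.range (n - i)).map (fun t => sgA n (n - 1 - t))).prod)

/-- `σ_{n−1}⁻¹ ⋯ σ_2⁻¹ · σ_1 · σ_2 ⋯ σ_{n−1}`. -/
def f0Target (n : ℕ) : ArtinB n :=
  (((List.range (n - 2)).map (fun t => (sgA n (n - 1 - t))⁻¹)).prod) * sgA n 1 *
  (((List.range (n - 2)).map (fun t => sgA n (t + 2))).prod)

/-- The defining property of the flattening homomorphism:
`flat (f_i) = σ_i` for `1 ≤ i ≤ n−1`, and `flat (ω) = σ_1 σ_2 ⋯ σ_{n−1}`. -/
def IsFlattening (n : ℕ) (φ : BrExt n →* ArtinB n) : Prop :=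
  (∀ i : ℕ, 1 ≤ i → i ≤ n - 1 → φ (fB n (i : ZMod n)) = sgA n i) ∧
  φ (omB n) = halfTwist n

-- relation extraction
lemma presented_rel {α : Type*} {rels : Set (FreeGroup α)} {r : FreeGroup α} (h : r ∈ rels) :
    PresentedGroup.mk rels r = 1 := by
  have : r ∈ Subgroup.normalClosure rels := Subgroup.subset_normalClosure h
  exact (QuotientGroup.eq_one_iff r).mpr this

lemma sgA_eq_of (n i : ℕ) (h1 : 1 ≤ i) (h2 : i ≤ n - 1) :
    sgA n i = PresentedGroup.of (⟨i - 1, by omega⟩ : Fin (n - 1)) := by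
  simp [sgA, h1, h2]

lemma sgA_eq_one (n i : ℕ) (h : ¬ (1 ≤ i ∧ i ≤ n - 1)) : sgA n i = 1 := by
  simp [sgA, h]

lemma braid_rel (n i : ℕ) (h1 : 1 ≤ i) (h2 : i + 1 ≤ n - 1) :
    sgA n i * sgA n (i + 1) * sgA n i = sgA n (i + 1) * sgA n i * sgA n (i + 1) := by
  rw [sgA_eq_of n i h1 (by omega), sgA_eq_of n (i+1) (by omega) h2]
  set a : Fin (n-1) := ⟨i - 1, by omega⟩
  set b : Fin (n-1) := ⟨i + 1 - 1, by omega⟩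
  have hr : (FreeGroup.of a * FreeGroup.of b * FreeGroup.of a *
      (FreeGroup.of b * FreeGroup.of a * FreeGroup.of b)⁻¹) ∈ artinRels n := by
    left; exact ⟨a, b, by simp [a, b]; omega, rfl⟩
  have := presented_rel hr
  simp only [map_mul, map_inv] at this
  exact mul_inv_eq_one.mp this

lemma comm_rel (n i j : ℕ) (h : i + 2 ≤ j) :
    sgA n i * sgA n j = sgA n j * sgA n i := by
  by_cases h1 : 1 ≤ i ∧ i ≤ n - 1
  · by_cases h2 : 1 ≤ j ∧ j ≤ n - 1
    · rw [sgA_eq_of n i h1.1 h1.2, sgA_eq_of n j h2.1 h2.2]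
      set a : Fin (n-1) := ⟨i - 1, by omega⟩
      set b : Fin (n-1) := ⟨j - 1, by omega⟩
      have hr : (FreeGroup.of a * FreeGroup.of b *
          (FreeGroup.of b * FreeGroup.of a)⁻¹) ∈ artinRels n := by
        right; exact ⟨a, b, by simp [a, b]; omega, rfl⟩
      have := presented_rel hr
      simp only [map_mul, map_inv] at this
      exact mul_inv_eq_one.mp this
    · rw [sgA_eq_one n j h2]; simp
  · rw [sgA_eq_one n i h1]; simp

-- asc/desc machinery
def asc (n a : ℕ) : ℕ → ArtinB n
  | 0 => 1
  | (len+1) => sgA n a * asc n (a+1) len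

def desc (n a : ℕ) : ℕ → ArtinB n
  | 0 => 1
  | (len+1) => desc n (a+1) len * sgA n a

@[simp] lemma asc_zero (n a : ℕ) : asc n a 0 = 1 := rfl
@[simp] lemma desc_zero (n a : ℕ) : desc n a 0 = 1 := rfl
lemma asc_succ (n a len : ℕ) : asc n a (len+1) = sgA n a * asc n (a+1) len := rfl
lemma desc_succ (n a len : ℕ) : desc n a (len+1) = desc n (a+1) len * sgA n a := rfl

lemma asc_succ' (n a : ℕ) : ∀ len, asc n a (len+1) = asc n a len * sgA n (a+len)
  | 0 => by simp [asc_succ]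
  | (l+1) => by
      have e : a + 1 + l = a + (l + 1) := by omega
      rw [asc_succ, asc_succ' n (a+1) l, e, asc_succ, mul_assoc]

lemma desc_succ' (n a : ℕ) : ∀ len, desc n a (len+1) = sgA n (a+len) * desc n a len
  | 0 => by simp [desc_succ]
  | (l+1) => by
      have e : a + 1 + l = a + (l + 1) := by omega
      rw [desc_succ, desc_succ' n (a+1) l, e, desc_succ, mul_assoc]

lemma asc_append (n a l1 : ℕ) : ∀ l2, asc n a (l1 + l2) = asc n a l1 * asc n (a + l1) l2
  | 0 => by simp
  | (l+1) => by
      have e : a + l1 + l = a + (l1 + l) := by omega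
      rw [asc_succ' n (a+l1) l, ← mul_assoc, ← asc_append n a l1 l, e, ← asc_succ']
      exact congrArg (asc n a) (by omega)

-- commuting lemmas
lemma sg_comm_asc_left (n k a : ℕ) (h : k + 2 ≤ a) :
    ∀ len, sgA n k * asc n a len = asc n a len * sgA n k := by
  intro len
  induction len generalizing a with
  | zero => simp
  | succ l ih =>
      rw [asc_succ, ← mul_assoc, comm_rel n k a h, mul_assoc, ih (a+1) (by omega), ← mul_assoc]

lemma sg_comm_asc_right (n k a len : ℕ) (h : a + len + 1 ≤ k) :
    sgA n k * asc n a len = asc n a len * sgA n k := by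
  induction len generalizing a with
  | zero => simp
  | succ l ih =>
      rw [asc_succ, ← mul_assoc, (comm_rel n a k (by omega)).symm, mul_assoc,
        ih (a+1) (by omega), ← mul_assoc]

lemma sg_comm_desc_left (n k a : ℕ) (h : k + 2 ≤ a) :
    ∀ len, sgA n k * desc n a len = desc n a len * sgA n k := by
  intro len
  induction len generalizing a with
  | zero => simp
  | succ l ih =>
      rw [desc_succ, ← mul_assoc, ih (a+1) (by omega), mul_assoc, comm_rel n k a h, ← mul_assoc]

lemma sg_comm_desc_right (n k a len : ℕ) (h : a + len + 1 ≤ k) :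
    sgA n k * desc n a len = desc n a len * sgA n k := by
  induction len generalizing a with
  | zero => simp
  | succ l ih =>
      rw [desc_succ, ← mul_assoc, ih (a+1) (by omega), mul_assoc,
        (comm_rel n a k (by omega)).symm, ← mul_assoc]

-- shift lemmas
lemma asc_shift (n : ℕ) : ∀ len a k, 1 ≤ a → a ≤ k → k + 2 ≤ a + len → a + len ≤ n →
    asc n a len * sgA n k = sgA n (k+1) * asc n a len := by
  intro len
  induction len with
  | zero => intro a k _ _ h3 _; omega
  | succ l ih =>
      intro a k h1 h2 h3 h4
      rcases Nat.eq_or_lt_of_le h2 with rfl | hlt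
      · -- k = a
        obtain ⟨m, rfl⟩ : ∃ m, l = m + 1 := ⟨l - 1, by omega⟩
        have hc := sg_comm_asc_left n a (a+2) (by omega) m
        calc asc n a (m+1+1) * sgA n a
            = sgA n a * sgA n (a+1) * (asc n (a+2) m * sgA n a) := by
              rw [asc_succ, asc_succ]; group
          _ = sgA n a * sgA n (a+1) * sgA n a * asc n (a+2) m := by
              rw [← hc]; group
          _ = sgA n (a+1) * sgA n a * sgA n (a+1) * asc n (a+2) m := by
              rw [braid_rel n a h1 (by omega)]
          _ = sgA n (a+1) * asc n a (m+1+1) := by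
              rw [asc_succ, asc_succ]; group
      · -- a < k
        rw [asc_succ, mul_assoc, ih (a+1) k (by omega) hlt (by omega) (by omega),
          ← mul_assoc, comm_rel n a (k+1) (by omega), mul_assoc, ← asc_succ]

lemma desc_shift (n : ℕ) : ∀ len a k, 1 ≤ a → a + 1 ≤ k → k + 1 ≤ a + len → k + 1 ≤ n →
    desc n a len * sgA n k = sgA n (k-1) * desc n a len := by
  intro len
  induction len with
  | zero => intro a k _ _ h3 _; omega
  | succ l ih =>
      intro a k h1 h2 h3 h4
      rcases Nat.eq_or_lt_of_le h2 with hk | hlt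
      · -- k = a+1
        subst hk
        obtain ⟨m, rfl⟩ : ∃ m, l = m + 1 := ⟨l - 1, by omega⟩
        have hc := sg_comm_desc_left n a (a+2) (by omega) m
        have ha : a + 1 - 1 = a := by omega
        rw [ha]
        calc desc n a (m+1+1) * sgA n (a+1)
            = desc n (a+2) m * (sgA n (a+1) * sgA n a * sgA n (a+1)) := by
              rw [desc_succ, desc_succ]; group
          _ = desc n (a+2) m * (sgA n a * sgA n (a+1) * sgA n a) := by
              rw [← braid_rel n a h1 (by omega)]
          _ = desc n (a+2) m * sgA n a * (sgA n (a+1) * sgA n a) := by group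
          _ = sgA n a * desc n (a+2) m * (sgA n (a+1) * sgA n a) := by rw [← hc]
          _ = sgA n a * desc n a (m+1+1) := by
              rw [desc_succ, desc_succ]; group
      · -- a+1 < k
        rw [desc_succ, mul_assoc, comm_rel n a k (by omega), ← mul_assoc,
          ih (a+1) k (by omega) (by omega) (by omega) (by omega), mul_assoc, ← desc_succ]

-- asc conjugates asc / desc upward
lemma asc_shift_asc (n a len b : ℕ) (h1 : 1 ≤ a) (h2 : a ≤ b) (h4 : a + len ≤ n) :
    ∀ lb, b + lb + 1 ≤ a + len →
    asc n a len * asc n b lb = asc n (b+1) lb * asc n a len := by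
  intro lb
  induction lb with
  | zero => simp
  | succ l ih =>
      intro h3
      have e : b + 1 + l = b + l + 1 := by omega
      rw [asc_succ' n b l, asc_succ' n (b+1) l, e, ← mul_assoc, ih (by omega), mul_assoc,
        asc_shift n len a (b+l) h1 (by omega) (by omega) h4, ← mul_assoc]

lemma asc_shift_desc (n a len b : ℕ) (h1 : 1 ≤ a) (h2 : a ≤ b) (h4 : a + len ≤ n) :
    ∀ lb, b + lb + 1 ≤ a + len →
    asc n a len * desc n b lb = desc n (b+1) lb * asc n a len := by
  intro lb
  induction lb with
  | zero => simp
  | succ l ih =>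
      intro h3
      have e : b + 1 + l = b + l + 1 := by omega
      rw [desc_succ' n b l, desc_succ' n (b+1) l, e, ← mul_assoc,
        asc_shift n len a (b+l) h1 (by omega) (by omega) h4, mul_assoc, ih (by omega),
        ← mul_assoc]

-- list evaluation lemmas
lemma asc_eq (n : ℕ) : ∀ len a, asc n a len = ((List.range len).map (fun t => sgA n (a + t))).prod
  | 0, a => by simp
  | (l+1), a => by
      have e2 : List.map ((fun t => sgA n (a + t)) ∘ Nat.succ) (List.range l)
          = List.map (fun t => sgA n (a + 1 + t)) (List.range l) :=
        List.map_congr_left (fun t _ => by simp only [Function.comp_apply]; congr 1; omega)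
      rw [List.range_succ_eq_map, List.map_cons, List.prod_cons, List.map_map, e2,
        asc_succ, asc_eq n l (a+1)]
      simp

lemma desc_eq (n : ℕ) :
    ∀ len a, desc n a len = ((List.range len).map (fun t => sgA n (a + len - 1 - t))).prod
  | 0, a => by simp
  | (l+1), a => by
      have e1 : a + (l + 1) - 1 - 0 = a + l := by omega
      have e2 : List.map ((fun t => sgA n (a + (l+1) - 1 - t)) ∘ Nat.succ) (List.range l)
          = List.map (fun t => sgA n (a + l - 1 - t)) (List.range l) :=
        List.map_congr_left (fun t _ => by simp only [Function.comp_apply]; congr 1; omega)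
      rw [List.range_succ_eq_map, List.map_cons, List.prod_cons, List.map_map, e1, e2,
        desc_succ' n a l, desc_eq n l a]

lemma inv_desc_list (n : ℕ) :
    ∀ len a, ((List.range len).map (fun t => (sgA n (a + len - 1 - t))⁻¹)).prod = (asc n a len)⁻¹
  | 0, a => by simp
  | (l+1), a => by
      have e1 : a + (l + 1) - 1 - 0 = a + l := by omega
      have e2 : List.map ((fun t => (sgA n (a + (l+1) - 1 - t))⁻¹) ∘ Nat.succ) (List.range l)
          = List.map (fun t => (sgA n (a + l - 1 - t))⁻¹) (List.range l) :=
        List.map_congr_left (fun t _ => by simp only [Function.comp_apply]; congr 2; omega)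
      rw [List.range_succ_eq_map, List.map_cons, List.prod_cons, List.map_map, e1, e2,
        inv_desc_list n l a, asc_succ' n a l, mul_inv_rev]

lemma inv_rev_range_list (n : ℕ) :
    ∀ m, (((List.range m).reverse.map (fun k => (sgA n (k + 1))⁻¹)).prod) = (asc n 1 m)⁻¹
  | 0 => by simp
  | (m+1) => by
      have e : 1 + m = m + 1 := by omega
      rw [List.range_succ, List.reverse_append, List.map_append, List.prod_append]
      simp only [List.reverse_cons, List.reverse_nil, List.nil_append, List.map_cons,
        List.map_nil, List.prod_cons, List.prod_nil]
      rw [inv_rev_range_list n m, asc_succ' n 1 m, e, mul_inv_rev, mul_one]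

-- delta and the commuting of its n-th power
def dlt (n : ℕ) : ArtinB n := asc n 1 (n-1)

lemma delta_shift (n k : ℕ) (hn : 2 ≤ n) (h1 : 1 ≤ k) (h2 : k ≤ n-2) :
    dlt n * sgA n k = sgA n (k+1) * dlt n :=
  asc_shift n (n-1) 1 k le_rfl h1 (by omega) (by omega)

lemma delta_pow_shift (n : ℕ) (hn : 2 ≤ n) : ∀ k, k ≤ n - 2 →
    dlt n ^ k * sgA n 1 = sgA n (k+1) * dlt n ^ k := by
  intro k
  induction k with
  | zero => simp
  | succ k ih =>
      intro h
      calc dlt n ^ (k+1) * sgA n 1 = dlt n * (dlt n ^ k * sgA n 1) := by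
            rw [pow_succ']; group
        _ = dlt n * (sgA n (k+1) * dlt n ^ k) := by rw [ih (by omega)]
        _ = (dlt n * sgA n (k+1)) * dlt n ^ k := by group
        _ = (sgA n (k+1+1) * dlt n) * dlt n ^ k := by
            rw [delta_shift n (k+1) hn (by omega) (by omega)]
        _ = sgA n (k+1+1) * dlt n ^ (k+1) := by rw [pow_succ']; group

lemma H_lemma (n : ℕ) : ∀ d k, 1 ≤ k → k + d + 1 = n →
    asc n (k+1) d * asc n k d * sgA n (n-1) = sgA n k * (asc n (k+1) d * asc n k d) := by
  intro d
  induction d with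
  | zero =>
      intro k h1 h2
      simp only [asc_zero, mul_one, one_mul]
      exact congrArg (sgA n) (by omega)
  | succ d ih =>
      intro k h1 h2
      have hc := sg_comm_asc_left n k (k+1+1) (by omega) d
      have hb : sgA n (k+1) * sgA n k * sgA n (k+1) = sgA n k * sgA n (k+1) * sgA n k :=
        (braid_rel n k h1 (by omega)).symm
      calc asc n (k+1) (d+1) * asc n k (d+1) * sgA n (n-1)
          = sgA n (k+1) * (asc n (k+1+1) d * sgA n k) * asc n (k+1) d * sgA n (n-1) := by
            rw [asc_succ n (k+1) d, asc_succ n k d]; group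
        _ = sgA n (k+1) * (sgA n k * asc n (k+1+1) d) * asc n (k+1) d * sgA n (n-1) := by
            rw [hc]
        _ = sgA n (k+1) * sgA n k * (asc n (k+1+1) d * asc n (k+1) d * sgA n (n-1)) := by
            group
        _ = sgA n (k+1) * sgA n k * (sgA n (k+1) * (asc n (k+1+1) d * asc n (k+1) d)) := by
            rw [ih (k+1) (by omega) (by omega)]
        _ = sgA n (k+1) * sgA n k * sgA n (k+1) * (asc n (k+1+1) d * asc n (k+1) d) := by
            group
        _ = sgA n k * sgA n (k+1) * sgA n k * (asc n (k+1+1) d * asc n (k+1) d) := by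
            rw [hb]
        _ = sgA n k * (sgA n (k+1) * ((sgA n k * asc n (k+1+1) d) * asc n (k+1) d)) := by
            group
        _ = sgA n k * (sgA n (k+1) * ((asc n (k+1+1) d * sgA n k) * asc n (k+1) d)) := by
            rw [hc]
        _ = sgA n k * (asc n (k+1) (d+1) * asc n k (d+1)) := by
            rw [asc_succ n (k+1) d, asc_succ n k d]; group

lemma delta_sq_comm (n : ℕ) (hn : 2 ≤ n) :
    dlt n * dlt n * sgA n (n-1) = sgA n 1 * (dlt n * dlt n) := by
  have e : n - 1 = (n-2) + 1 := by omega
  have e2 : 1 + (n-2) = n - 1 := by omega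
  have hWs : dlt n = asc n 1 (n-2) * sgA n (n-1) := by
    unfold dlt
    rw [congrArg (asc n 1) e, asc_succ' n 1 (n-2), congrArg (sgA n) e2]
  have h2 : dlt n * asc n 1 (n-2) = asc n 2 (n-2) * dlt n := by
    unfold dlt
    exact asc_shift_asc n 1 (n-1) 1 le_rfl le_rfl (by omega) (n-2) (by omega)
  have hH := H_lemma n (n-2) 1 le_rfl (by omega)
  norm_num at hH
  -- hH : asc n 2 (n-2) * asc n 1 (n-2) * sgA n (n-1) = sgA n 1 * (asc n 2 (n-2) * asc n 1 (n-2))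
  rw [hWs] at h2 ⊢
  set W := asc n 1 (n-2)
  set R := asc n 2 (n-2)
  set s := sgA n (n-1)
  calc W * s * (W * s) * s
      = ((W * s) * W) * (s * s) := by group
    _ = (R * (W * s)) * (s * s) := by rw [h2]
    _ = ((R * W * s) * s) * s := by group
    _ = ((sgA n 1 * (R * W)) * s) * s := by rw [hH]
    _ = sgA n 1 * ((R * (W * s)) * s) := by group
    _ = sgA n 1 * (((W * s) * W) * s) := by rw [← h2]
    _ = sgA n 1 * (W * s * (W * s)) := by group

lemma delta_pow_n_comm (n : ℕ) (hn : 2 ≤ n) :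
    dlt n ^ n * sgA n 1 = sgA n 1 * dlt n ^ n := by
  have h1 := delta_pow_shift n hn (n-2) le_rfl
  have e1 : n - 2 + 1 = n - 1 := by omega
  rw [e1] at h1
  have h2 := delta_sq_comm n hn
  have hp : dlt n ^ n = dlt n * dlt n * dlt n ^ (n-2) := by
    have : dlt n * dlt n * dlt n ^ (n-2) = dlt n ^ n := by
      rw [← pow_two, ← pow_add]
      exact congrArg (fun m => dlt n ^ m) (by omega : 2 + (n-2) = n)
    exact this.symm
  calc dlt n ^ n * sgA n 1 = (dlt n * dlt n) * (dlt n ^ (n-2) * sgA n 1) := by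
        rw [hp]; group
    _ = (dlt n * dlt n) * (sgA n (n-1) * dlt n ^ (n-2)) := by rw [h1]
    _ = (dlt n * dlt n * sgA n (n-1)) * dlt n ^ (n-2) := by group
    _ = (sgA n 1 * (dlt n * dlt n)) * dlt n ^ (n-2) := by rw [h2]
    _ = sgA n 1 * dlt n ^ n := by rw [hp]; group

-- the conjugates of sigma_1 by powers of delta
def cj (n : ℕ) (x : ℤ) : ArtinB n := dlt n ^ x * sgA n 1 * dlt n ^ (-x)

lemma cj_add_one (n : ℕ) (x : ℤ) : cj n (x + 1) = dlt n * cj n x * (dlt n)⁻¹ := by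
  unfold cj; group

lemma cj_natCast (n : ℕ) (hn : 2 ≤ n) (k : ℕ) (h : k ≤ n - 2) : cj n k = sgA n (k+1) := by
  have h1 := delta_pow_shift n hn k h
  unfold cj
  rw [zpow_natCast]
  calc dlt n ^ k * sgA n 1 * dlt n ^ (-(k:ℤ))
      = sgA n (k+1) * dlt n ^ k * dlt n ^ (-(k:ℤ)) := by rw [h1]
    _ = sgA n (k+1) := by
        rw [mul_assoc, ← zpow_natCast (dlt n) k, ← zpow_add]
        simp

lemma cj_period (n : ℕ) (hn : 2 ≤ n) (x : ℤ) : cj n (x + n) = cj n x := by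
  have hz : dlt n ^ (n:ℤ) * sgA n 1 = sgA n 1 * dlt n ^ (n:ℤ) := by
    rw [zpow_natCast]; exact delta_pow_n_comm n hn
  unfold cj
  rw [show -(x + (n:ℤ)) = -(n:ℤ) + (-x) from by ring, zpow_add, zpow_add]
  calc dlt n ^ x * dlt n ^ (n:ℤ) * sgA n 1 * (dlt n ^ (-(n:ℤ)) * dlt n ^ (-x))
      = dlt n ^ x * (dlt n ^ (n:ℤ) * sgA n 1) * (dlt n ^ (-(n:ℤ)) * dlt n ^ (-x)) := by group
    _ = dlt n ^ x * (sgA n 1 * dlt n ^ (n:ℤ)) * (dlt n ^ (-(n:ℤ)) * dlt n ^ (-x)) := by rw [hz]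
    _ = dlt n ^ x * sgA n 1 * dlt n ^ (-x) := by group

lemma cj_mod (n : ℕ) (hn : 2 ≤ n) (x : ℤ) : ∀ k : ℤ, cj n (x + n * k) = cj n x := by
  intro k
  induction k using Int.induction_on with
  | zero => simp
  | succ k ih =>
      have e : x + n * (k + 1) = (x + n * k) + n := by ring
      rw [e, cj_period n hn, ih]
  | pred k ih =>
      have e : x + n * (-k - 1) + n = x + n * (-k) := by ring
      have := cj_period n hn (x + n * (-k - 1))
      rw [e] at this
      exact this.symm.trans ih

lemma cj_congr (n : ℕ) (hn : 2 ≤ n) (x y : ℤ) (h : (n:ℤ) ∣ (y - x)) : cj n y = cj n x := by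
  obtain ⟨k, hk⟩ := h
  have : y = x + n * k := by linarith
  rw [this, cj_mod n hn]

-- construction of the flattening homomorphism
lemma halfTwist_eq (n : ℕ) : halfTwist n = dlt n := by
  unfold halfTwist dlt
  rw [asc_eq]
  exact congrArg List.prod (List.map_congr_left (fun t _ => by rw [Nat.add_comm]))

lemma cj_shift (n : ℕ) (a c : ℤ) : cj n (a + c) = dlt n ^ a * cj n c * dlt n ^ (-a) := by
  unfold cj; group

lemma int_dvd_of_zmod_eq (n : ℕ) (x : ℤ) (h : (x : ZMod n) = 0) : (n:ℤ) ∣ x :=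
  (ZMod.intCast_zmod_eq_zero_iff_dvd x n).mp h

def FF (n : ℕ) : ExtGen n → ArtinB n
  | .f i => cj n ((i.val : ℤ) - 1)
  | .om => dlt n

lemma FF_rels (n : ℕ) (hn : 2 ≤ n) : ∀ r ∈ extRels n, FreeGroup.lift (FF n) r = 1 := by
  haveI : NeZero n := ⟨by omega⟩
  intro r hr
  rcases hr with ⟨i, h3, rfl⟩ | ⟨i, j, hj1, hj2, hj3, rfl⟩ | ⟨i, rfl⟩
  · -- braid relation
    simp only [map_mul, map_inv, FreeGroup.lift_apply_of, FF]
    have hdvd : (n:ℤ) ∣ ((((i+1).val : ℤ) - 1) - (((i.val : ℤ) - 1) + 1)) := by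
      apply int_dvd_of_zmod_eq
      push_cast
      rw [ZMod.natCast_rightInverse i, ZMod.natCast_rightInverse (i+1)]
      ring
    have hb : cj n (((i+1).val : ℤ) - 1) = cj n (((i.val : ℤ) - 1) + 1) :=
      cj_congr n hn _ _ hdvd
    have hc2 : cj n (1:ℤ) = sgA n 2 := by
      have h := cj_natCast n hn 1 (by omega)
      norm_num at h
      exact h
    have ca : MulAut.conj (dlt n ^ ((i.val : ℤ) - 1)) (sgA n 1) = cj n ((i.val : ℤ) - 1) := by
      simp only [MulAut.conj_apply, cj]
      group
    have cb : MulAut.conj (dlt n ^ ((i.val : ℤ) - 1)) (sgA n 2)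
        = cj n (((i+1).val : ℤ) - 1) := by
      rw [hb, cj_shift, hc2]
      simp only [MulAut.conj_apply]
      group
    have hbr : cj n ((i.val : ℤ) - 1) * cj n (((i+1).val : ℤ) - 1) * cj n ((i.val : ℤ) - 1)
        = cj n (((i+1).val : ℤ) - 1) * cj n ((i.val : ℤ) - 1) * cj n (((i+1).val : ℤ) - 1) := by
      rw [← ca, ← cb, ← map_mul, ← map_mul, ← map_mul, ← map_mul]
      exact congrArg _ (braid_rel n 1 le_rfl (by omega))
    rw [hbr]
    group
  · -- commutation relation
    simp only [map_mul, map_inv, FreeGroup.lift_apply_of, FF]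
    have hlt : (j - i).val < n := ZMod.val_lt _
    have hji : (((j - i).val : ℕ) : ZMod n) = j - i := ZMod.natCast_rightInverse (j - i)
    have hc0 : (j - i).val ≠ 0 := by
      intro h
      rw [h] at hji
      push_cast at hji
      exact hj2 (by linear_combination -hji)
    have hc1 : (j - i).val ≠ 1 := by
      intro h
      rw [h] at hji
      push_cast at hji
      exact hj3 (by linear_combination -hji)
    have hcn : (j - i).val ≠ n - 1 := by
      intro h
      rw [h] at hji
      have hn1 : ((n - 1 : ℕ) : ZMod n) = -1 := by
        have : ((n : ℕ) : ZMod n) = 0 := ZMod.natCast_self n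
        push_cast [Nat.cast_sub (by omega : 1 ≤ n)]
        rw [this]; ring
      rw [hn1] at hji
      exact hj1 (by linear_combination -hji)
    have hc2le : (j - i).val ≤ n - 2 := by omega
    have hc2ge : 2 ≤ (j - i).val := by omega
    have hdvd : (n:ℤ) ∣ ((((j).val : ℤ) - 1) - ((((i.val : ℤ) - 1)) + ((j - i).val : ℤ))) := by
      apply int_dvd_of_zmod_eq
      push_cast
      rw [ZMod.natCast_rightInverse i, ZMod.natCast_rightInverse j,
        ZMod.natCast_rightInverse (j - i)]
      ring
    have hb : cj n (((j).val : ℤ) - 1) = cj n ((((i.val : ℤ) - 1)) + ((j - i).val : ℤ)) :=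
      cj_congr n hn _ _ hdvd
    have ca : MulAut.conj (dlt n ^ ((i.val : ℤ) - 1)) (sgA n 1) = cj n ((i.val : ℤ) - 1) := by
      simp only [MulAut.conj_apply, cj]
      group
    have cb : MulAut.conj (dlt n ^ ((i.val : ℤ) - 1)) (sgA n ((j - i).val + 1))
        = cj n (((j).val : ℤ) - 1) := by
      rw [hb, cj_shift, cj_natCast n hn _ hc2le]
      simp only [MulAut.conj_apply]
      group
    have hcm : cj n ((i.val : ℤ) - 1) * cj n (((j).val : ℤ) - 1)
        = cj n (((j).val : ℤ) - 1) * cj n ((i.val : ℤ) - 1) := by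
      rw [← ca, ← cb, ← map_mul, ← map_mul]
      exact congrArg _ (comm_rel n 1 ((j - i).val + 1) (by omega))
    rw [hcm]
    group
  · -- omega relation
    simp only [map_mul, map_inv, FreeGroup.lift_apply_of, FF]
    have hdvd : (n:ℤ) ∣ ((((i+1).val : ℤ) - 1) - (((i.val : ℤ) - 1) + 1)) := by
      apply int_dvd_of_zmod_eq
      push_cast
      rw [ZMod.natCast_rightInverse i, ZMod.natCast_rightInverse (i+1)]
      ring
    have hb : cj n (((i+1).val : ℤ) - 1) = cj n (((i.val : ℤ) - 1) + 1) :=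
      cj_congr n hn _ _ hdvd
    rw [← cj_add_one, ← hb]
    simp

-- the flattening homomorphism
def flatHom (n : ℕ) (hn : 2 ≤ n) : BrExt n →* ArtinB n := PresentedGroup.toGroup (FF_rels n hn)

lemma flatHom_flattening (n : ℕ) (hn : 2 ≤ n) : IsFlattening n (flatHom n hn) := by
  haveI : NeZero n := ⟨by omega⟩
  constructor
  · intro i h1 h2
    unfold flatHom fB
    rw [PresentedGroup.toGroup.of]
    show FF n (ExtGen.f (i : ZMod n)) = sgA n i
    simp only [FF]
    have hv : ((i : ZMod n)).val = i := by
      rw [ZMod.val_natCast, Nat.mod_eq_of_lt (by omega)]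
    rw [hv]
    have he : ((i:ℤ) - 1) = ((i - 1 : ℕ) : ℤ) := by omega
    rw [he, cj_natCast n hn (i-1) (by omega)]
    exact congrArg (sgA n) (by omega)
  · unfold flatHom omB
    rw [PresentedGroup.toGroup.of]
    show FF n ExtGen.om = halfTwist n
    rw [halfTwist_eq]
    rfl

-- relation in BrExt
lemma omB_conj (n : ℕ) (i : ZMod n) : omB n * fB n i * (omB n)⁻¹ = fB n (i + 1) := by
  have hr : (FreeGroup.of ExtGen.om * FreeGroup.of (ExtGen.f i) * (FreeGroup.of ExtGen.om)⁻¹ *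
      (FreeGroup.of (ExtGen.f (i+1)))⁻¹) ∈ extRels n := Or.inr (Or.inr ⟨i, rfl⟩)
  have h := presented_rel hr
  simp only [map_mul, map_inv] at h
  exact mul_inv_eq_one.mp h

-- value of phi on f_0
lemma phi_f0 (n : ℕ) (hn : 2 ≤ n) (φ : BrExt n →* ArtinB n) (Hf : IsFlattening n φ) :
    φ (fB n 0) = f0Target n := by
  obtain ⟨hσ, hω⟩ := Hf
  have h0 := omB_conj n 0
  have h1 : fB n (0 + 1 : ZMod n) = fB n ((1 : ℕ) : ZMod n) := by norm_num
  rw [h1] at h0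
  have h2 : φ (omB n * fB n 0 * (omB n)⁻¹) = sgA n 1 := by
    rw [h0]; exact hσ 1 le_rfl (by omega)
  simp only [map_mul, map_inv, hω, halfTwist_eq] at h2
  -- h2 : dlt n * φ (fB n 0) * (dlt n)⁻¹ = sgA n 1
  have h3 : φ (fB n 0) = (dlt n)⁻¹ * sgA n 1 * dlt n := by
    rw [← h2]; group
  rw [h3]
  have hdlt1 : dlt n = sgA n 1 * asc n 2 (n-2) := by
    unfold dlt
    rw [congrArg (asc n 1) (show n - 1 = (n-2)+1 from by omega), asc_succ n 1 (n-2)]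
  unfold f0Target
  have e1 : ((List.range (n-2)).map (fun t => (sgA n (n - 1 - t))⁻¹)).prod
      = (asc n 2 (n-2))⁻¹ := by
    rw [← inv_desc_list n (n-2) 2]
    exact congrArg List.prod (List.map_congr_left (fun t _ => by
      congr 1; exact congrArg (sgA n) (by omega)))
  have e2 : ((List.range (n-2)).map (fun t => sgA n (t + 2))).prod = asc n 2 (n-2) := by
    rw [asc_eq n (n-2) 2]
    exact congrArg List.prod (List.map_congr_left (fun t _ => congrArg (sgA n) (by omega)))
  rw [e1, e2, hdlt1]
  group

-- value of phi on y_i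
lemma phi_yB (n : ℕ) (hn : 2 ≤ n) (φ : BrExt n →* ArtinB n) (Hf : IsFlattening n φ)
    (i : ℕ) (h1 : 1 ≤ i) (h2 : i ≤ n) :
    φ (yB n i) = (asc n 1 (i-1))⁻¹ * dlt n * desc n i (n-i) := by
  obtain ⟨hσ, hω⟩ := Hf
  unfold yB
  rw [map_mul, map_mul, hω, halfTwist_eq]
  congr 1
  · congr 1
    rw [map_list_prod, List.map_map]
    have he : List.map (φ ∘ fun k => (fB n ((k+1:ℕ) : ZMod n))⁻¹) ((List.range (i-1)).reverse)
        = List.map (fun k => (sgA n (k+1))⁻¹) ((List.range (i-1)).reverse) := by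
      apply List.map_congr_left
      intro k hk
      rw [List.mem_reverse, List.mem_range] at hk
      simp only [Function.comp_apply, map_inv]
      rw [hσ (k+1) (by omega) (by omega)]
    rw [he, inv_rev_range_list n (i-1)]
  · rw [map_list_prod, List.map_map]
    have he : List.map (φ ∘ fun k => fB n ((n-1-k:ℕ) : ZMod n)) (List.range (n-i))
        = List.map (fun k => sgA n (n-1-k)) (List.range (n-i)) := by
      apply List.map_congr_left
      intro k hk
      rw [List.mem_range] at hk
      simp only [Function.comp_apply]
      exact hσ (n-1-k) (by omega) (by omega)
    rw [he, desc_eq n (n-i) i]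
    exact congrArg List.prod (List.map_congr_left (fun t _ => congrArg (sgA n) (by omega)))

lemma jmB_eq (n i : ℕ) (h1 : 1 ≤ i) (h2 : i ≤ n) :
    jmB n i = asc n i (n-i) * desc n i (n-i) := by
  unfold jmB
  congr 1
  · exact (asc_eq n (n-i) i).symm
  · rw [desc_eq n (n-i) i]
    exact congrArg List.prod (List.map_congr_left (fun t _ => congrArg (sgA n) (by omega)))

lemma phi_yn (n : ℕ) (hn : 2 ≤ n) (φ : BrExt n →* ArtinB n) (Hf : IsFlattening n φ) :
    φ (yB n n) = 1 := by
  rw [phi_yB n hn φ Hf n (by omega) le_rfl]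
  simp [dlt, Nat.sub_self]

lemma phi_yi (n : ℕ) (hn : 2 ≤ n) (φ : BrExt n →* ArtinB n) (Hf : IsFlattening n φ)
    (i : ℕ) (h1 : 1 ≤ i) (h2 : i ≤ n - 1) :
    φ (yB n i) = jmB n i := by
  rw [phi_yB n hn φ Hf i h1 (by omega), jmB_eq n i h1 (by omega)]
  have hδ : dlt n = asc n 1 (i-1) * asc n i (n-i) := by
    unfold dlt
    rw [congrArg (asc n 1) (show n - 1 = (i-1)+(n-i) from by omega), asc_append n 1 (i-1) (n-i),
      congrArg (fun m => asc n m (n-i)) (show 1+(i-1) = i from by omega)]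
  rw [hδ]
  group

section MainInduction

variable (n i m : ℕ)

lemma U_lemma (h1 : 1 ≤ i) (hm : i + m = n) : ∀ j, j + 1 ≤ m →
    (asc n (i+1) (m-1)) ^ j * sgA n i
      = desc n (i+1) j * sgA n i * (desc n (i+1) j)⁻¹ * (asc n (i+1) (m-1)) ^ j := by
  intro j
  induction j with
  | zero => simp
  | succ j ih =>
      intro hj
      have hgd : asc n (i+1) (m-1) * desc n (i+1) j = desc n (i+1+1) j * asc n (i+1) (m-1) :=
        asc_shift_desc n (i+1) (m-1) (i+1) (by omega) le_rfl (by omega) j (by omega)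
      have hgd' : asc n (i+1) (m-1) * (desc n (i+1) j)⁻¹
          = (desc n (i+1+1) j)⁻¹ * asc n (i+1) (m-1) := by
        calc asc n (i+1) (m-1) * (desc n (i+1) j)⁻¹
            = (desc n (i+1+1) j)⁻¹ * (desc n (i+1+1) j * asc n (i+1) (m-1))
                * (desc n (i+1) j)⁻¹ := by group
          _ = (desc n (i+1+1) j)⁻¹ * (asc n (i+1) (m-1) * desc n (i+1) j)
                * (desc n (i+1) j)⁻¹ := by rw [hgd]
          _ = (desc n (i+1+1) j)⁻¹ * asc n (i+1) (m-1) := by group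
      have hg2 : asc n (i+1) (m-1) = sgA n (i+1) * asc n (i+1+1) (m-2) := by
        rw [congrArg (asc n (i+1)) (show m - 1 = (m-2)+1 from by omega), asc_succ n (i+1) (m-2)]
      have hgs : asc n (i+1) (m-1) * sgA n i
          = sgA n (i+1) * sgA n i * (sgA n (i+1))⁻¹ * asc n (i+1) (m-1) := by
        calc asc n (i+1) (m-1) * sgA n i
            = sgA n (i+1) * (asc n (i+1+1) (m-2) * sgA n i) := by rw [hg2]; group
          _ = sgA n (i+1) * (sgA n i * asc n (i+1+1) (m-2)) := by
              rw [← sg_comm_asc_left n i (i+1+1) (by omega) (m-2)]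
          _ = sgA n (i+1) * sgA n i * (sgA n (i+1))⁻¹
                * (sgA n (i+1) * asc n (i+1+1) (m-2)) := by group
          _ = sgA n (i+1) * sgA n i * (sgA n (i+1))⁻¹ * asc n (i+1) (m-1) := by rw [← hg2]
      calc asc n (i+1) (m-1) ^ (j+1) * sgA n i
          = asc n (i+1) (m-1) * (asc n (i+1) (m-1) ^ j * sgA n i) := by
            rw [pow_succ']; group
        _ = asc n (i+1) (m-1)
              * (desc n (i+1) j * sgA n i * (desc n (i+1) j)⁻¹ * asc n (i+1) (m-1) ^ j) := by
            rw [ih (by omega)]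
        _ = (asc n (i+1) (m-1) * desc n (i+1) j) * sgA n i * (desc n (i+1) j)⁻¹
              * asc n (i+1) (m-1) ^ j := by group
        _ = (desc n (i+1+1) j * asc n (i+1) (m-1)) * sgA n i * (desc n (i+1) j)⁻¹
              * asc n (i+1) (m-1) ^ j := by rw [hgd]
        _ = desc n (i+1+1) j * (asc n (i+1) (m-1) * sgA n i) * (desc n (i+1) j)⁻¹
              * asc n (i+1) (m-1) ^ j := by group
        _ = desc n (i+1+1) j * (sgA n (i+1) * sgA n i * (sgA n (i+1))⁻¹ * asc n (i+1) (m-1))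
              * (desc n (i+1) j)⁻¹ * asc n (i+1) (m-1) ^ j := by rw [hgs]
        _ = desc n (i+1+1) j * (sgA n (i+1) * sgA n i * (sgA n (i+1))⁻¹)
              * (asc n (i+1) (m-1) * (desc n (i+1) j)⁻¹) * asc n (i+1) (m-1) ^ j := by group
        _ = desc n (i+1+1) j * (sgA n (i+1) * sgA n i * (sgA n (i+1))⁻¹)
              * ((desc n (i+1+1) j)⁻¹ * asc n (i+1) (m-1)) * asc n (i+1) (m-1) ^ j := by
            rw [hgd']
        _ = (desc n (i+1+1) j * sgA n (i+1)) * sgA n i * ((desc n (i+1+1) j * sgA n (i+1)))⁻¹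
              * (asc n (i+1) (m-1) * asc n (i+1) (m-1) ^ j) := by group
        _ = desc n (i+1) (j+1) * sgA n i * (desc n (i+1) (j+1))⁻¹
              * asc n (i+1) (m-1) ^ (j+1) := by
            rw [desc_succ n (i+1) j, pow_succ']

lemma F_lemma (h1 : 1 ≤ i) (hm : i + m = n) : ∀ j, j + 1 ≤ m →
    desc n i j * (desc n (i+1) j * sgA n i * (desc n (i+1) j)⁻¹) * (desc n i j)⁻¹
      = sgA n (i+j) := by
  intro j
  induction j with
  | zero => simp
  | succ j ih =>
      intro hj
      have hv : desc n i (j+1) = sgA n (i+j) * desc n i j := desc_succ' n i j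
      have hw : desc n (i+1) (j+1) = sgA n (i+j+1) * desc n (i+1) j := by
        rw [desc_succ' n (i+1) j, congrArg (sgA n) (show i+1+j = i+j+1 from by omega)]
      have hcom : sgA n (i+j+1) * desc n i j = desc n i j * sgA n (i+j+1) :=
        sg_comm_desc_right n (i+j+1) i j (by omega)
      have hcom' : (desc n i j)⁻¹ * (sgA n (i+j+1))⁻¹
          = (sgA n (i+j+1))⁻¹ * (desc n i j)⁻¹ := by
        rw [← mul_inv_rev, ← mul_inv_rev, hcom]
      have hbr := braid_rel n (i+j) (by omega) (by omega)
      have he : i + (j+1) = i + j + 1 := by omega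
      rw [congrArg (sgA n) he, hv, hw]
      calc (sgA n (i+j) * desc n i j)
            * ((sgA n (i+j+1) * desc n (i+1) j) * sgA n i
                * (sgA n (i+j+1) * desc n (i+1) j)⁻¹)
            * (sgA n (i+j) * desc n i j)⁻¹
          = sgA n (i+j) * (desc n i j * sgA n (i+j+1))
              * (desc n (i+1) j * sgA n i * (desc n (i+1) j)⁻¹)
              * ((sgA n (i+j+1))⁻¹ * (desc n i j)⁻¹) * (sgA n (i+j))⁻¹ := by group
        _ = sgA n (i+j) * (sgA n (i+j+1) * desc n i j)
              * (desc n (i+1) j * sgA n i * (desc n (i+1) j)⁻¹)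
              * ((desc n i j)⁻¹ * (sgA n (i+j+1))⁻¹) * (sgA n (i+j))⁻¹ := by
            rw [← hcom, ← hcom']
        _ = sgA n (i+j) * sgA n (i+j+1)
              * (desc n i j * (desc n (i+1) j * sgA n i * (desc n (i+1) j)⁻¹)
                  * (desc n i j)⁻¹)
              * (sgA n (i+j+1))⁻¹ * (sgA n (i+j))⁻¹ := by group
        _ = sgA n (i+j) * sgA n (i+j+1) * sgA n (i+j)
              * (sgA n (i+j+1))⁻¹ * (sgA n (i+j))⁻¹ := by rw [ih (by omega)]
        _ = sgA n (i+j+1) := by rw [hbr]; group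

lemma R_lemma (h1 : 1 ≤ i) (hm : i + m = n) : ∀ j, j ≤ m →
    (asc n i m) ^ j = desc n i j * (asc n (i+1) (m-1)) ^ j := by
  intro j
  induction j with
  | zero => simp
  | succ j ih =>
      intro hj
      have hR : asc n i m = sgA n i * asc n (i+1) (m-1) := by
        rw [congrArg (asc n i) (show m = (m-1)+1 from by omega), asc_succ n i (m-1)]
      have hU := U_lemma n i m h1 hm j (by omega)
      have hF := F_lemma n i m h1 hm j (by omega)
      have hF' : desc n i j * (desc n (i+1) j * sgA n i * (desc n (i+1) j)⁻¹)
          = sgA n (i+j) * desc n i j := by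
        calc desc n i j * (desc n (i+1) j * sgA n i * (desc n (i+1) j)⁻¹)
            = (desc n i j * (desc n (i+1) j * sgA n i * (desc n (i+1) j)⁻¹)
                * (desc n i j)⁻¹) * desc n i j := by group
          _ = sgA n (i+j) * desc n i j := by rw [hF]
      calc asc n i m ^ (j+1)
          = asc n i m ^ j * asc n i m := pow_succ _ _
        _ = desc n i j * asc n (i+1) (m-1) ^ j * (sgA n i * asc n (i+1) (m-1)) := by
            rw [ih (by omega), hR]
        _ = desc n i j * (asc n (i+1) (m-1) ^ j * sgA n i) * asc n (i+1) (m-1) := by group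
        _ = desc n i j * (desc n (i+1) j * sgA n i * (desc n (i+1) j)⁻¹
              * asc n (i+1) (m-1) ^ j) * asc n (i+1) (m-1) := by rw [hU]
        _ = desc n i j * (desc n (i+1) j * sgA n i * (desc n (i+1) j)⁻¹)
              * (asc n (i+1) (m-1) ^ j * asc n (i+1) (m-1)) := by group
        _ = sgA n (i+j) * desc n i j * (asc n (i+1) (m-1) ^ j * asc n (i+1) (m-1)) := by
            rw [hF']
        _ = desc n i (j+1) * asc n (i+1) (m-1) ^ (j+1) := by
            rw [desc_succ' n i j, pow_succ]

end MainInduction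

lemma P_lemma (n : ℕ) : ∀ d i, 1 ≤ i → i + d = n →
    ((List.range d).map (fun t => jmB n (i+t))).prod = (asc n i d) ^ (d+1) := by
  intro d
  induction d with
  | zero => simp
  | succ d ih =>
      intro i h1 h2
      rw [List.range_succ_eq_map, List.map_cons, List.prod_cons, List.map_map]
      have e2 : List.map ((fun t => jmB n (i+t)) ∘ Nat.succ) (List.range d)
          = List.map (fun t => jmB n ((i+1)+t)) (List.range d) :=
        List.map_congr_left (fun t _ => by
          simp only [Function.comp_apply]; exact congrArg (jmB n) (by omega))
      rw [e2, ih (i+1) (by omega) (by omega)]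
      simp only [Nat.add_zero]
      have hjm : jmB n i = asc n i (d+1) * desc n i (d+1) := by
        rw [jmB_eq n i h1 (by omega), show n - i = d + 1 from by omega]
      have key := R_lemma n i (d+1) h1 (by omega) (d+1) le_rfl
      simp only [Nat.add_sub_cancel] at key
      calc jmB n i * asc n (i+1) d ^ (d+1)
          = asc n i (d+1) * (desc n i (d+1) * asc n (i+1) d ^ (d+1)) := by rw [hjm]; group
        _ = asc n i (d+1) * asc n i (d+1) ^ (d+1) := by rw [← key]
        _ = asc n i (d+1) ^ (d+1+1) := (pow_succ' _ _).symm

theorem statement_18 (n : ℕ) (hn : 2 ≤ n) :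
    -- there exists a group homomorphism `flat : Br_extg → B_n` with the defining property …
    (∃ φ : BrExt n →* ArtinB n, IsFlattening n φ) ∧
    -- … and any such homomorphism necessarily satisfies:
    (∀ φ : BrExt n →* ArtinB n, IsFlattening n φ →
      -- `flat (f_0) = σ_{n−1}⁻¹ ⋯ σ_2⁻¹ · σ_1 · σ_2 ⋯ σ_{n−1}`
      φ (fB n 0) = f0Target n ∧
      -- `flat (y_n) = 1`
      φ (yB n n) = 1 ∧
      -- `flat (y_i) = j_i` for `1 ≤ i ≤ n−1`
      (∀ i : ℕ, 1 ≤ i → i ≤ n - 1 → φ (yB n i) = jmB n i) ∧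
      -- `flat (ω^n) = j_1 j_2 ⋯ j_{n−1}`, the full twist `(σ_1 σ_2 ⋯ σ_{n−1})^n`
      φ (omB n ^ n) = ((List.range (n - 1)).map (fun t => jmB n (t + 1))).prod ∧
      ((List.range (n - 1)).map (fun t => jmB n (t + 1))).prod = halfTwist n ^ n) := by
  have hP := P_lemma n (n-1) 1 le_rfl (by omega)
  have e2 : List.map (fun t => jmB n (1+t)) (List.range (n-1))
      = List.map (fun t => jmB n (t+1)) (List.range (n-1)) :=
    List.map_congr_left (fun t _ => congrArg (jmB n) (by omega))
  constructor
  · exact ⟨flatHom n hn, flatHom_flattening n hn⟩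
  · intro φ Hf
    refine ⟨phi_f0 n hn φ Hf, phi_yn n hn φ Hf, fun i h1 h2 => phi_yi n hn φ Hf i h1 h2, ?_, ?_⟩
    · rw [map_pow, Hf.2, halfTwist_eq, ← e2, hP]
      exact congrArg (fun m => asc n 1 (n-1) ^ m) (by omega : n = n - 1 + 1)
    · rw [halfTwist_eq, ← e2, hP]
      exact (congrArg (fun m => asc n 1 (n-1) ^ m) (by omega : n = n - 1 + 1)).symm
end
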